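/- arXiv:1512.04997 — 5 statements merged into one kernel-verified Lean document; each statement's English description precedes it below -/
import Mathlib

section
/- Let p be a prime, q = p^m, and let I be a finite index set with values i(u) ∈ {0,...,q-1} for u ∈ I. Let s(a) denote the base-p digit sum of a, and τ the cyclic digit-shift map. Suppose that for some positive integer K, Σ_u τ^h(i(u)) ≥ (q-1)K for all 0 ≤ h ≤ m-1 (in particular Σ_u i(u) ≥ (q-1)K). Then Σ_u s(i(u)) ≥ m(p-1)K, using the identity Σ_{h=0}^{m-1} Σ_u τ^h(i(u)) = ((q-1)/(p-1)) Σ_u s(i(u)). -/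
/-- The cyclic shift of base-`p` digits of `a ∈ {0, …, p^m - 1}`. -/
def tau (p m a : ℕ) : ℕ := a / p ^ (m - 1) + (a % p ^ (m - 1)) * p

lemma tauA (p m : ℕ) (hp : 2 ≤ p) (a : ℕ) (ha : a < p ^ m) :
    ∀ h, h ≤ m → (tau p m)^[h] a = a / p ^ (m - h) + (a % p ^ (m - h)) * p ^ h := by
  intro h
  induction h with
  | zero => intro _; simp [Nat.mod_eq_of_lt ha, Nat.div_eq_of_lt ha]
  | succ h ih =>
    intro hhm
    have hh : h ≤ m := by omega
    rw [Function.iterate_succ_apply', ih hh]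
    obtain ⟨e, he⟩ : ∃ e, m - h = e + 1 := ⟨m - h - 1, by omega⟩
    have hme : m - (h + 1) = e := by omega
    have hpow : p ^ (m - h) = p ^ e * p := by rw [he, pow_succ]
    have hm1 : p ^ (m - 1) = p ^ h * p ^ e := by rw [← pow_add]; congr 1; omega
    rw [hpow, hme]
    have hpe : 0 < p ^ e := pow_pos (by omega) e
    have hph : 0 < p ^ h := pow_pos (by omega) h
    set hi := a / (p ^ e * p) with hhi_def
    set lo := a % (p ^ e * p) with hlo_def
    have hhi : hi < p ^ h := by
      apply Nat.div_lt_of_lt_mul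
      calc a < p ^ m := ha
        _ = p ^ e * p * p ^ h := by rw [← pow_succ, ← pow_add]; congr 1; omega
    have key : a = p ^ e * (p * hi) + lo := by
      have h1 := Nat.div_add_mod a (p ^ e * p)
      rw [← hhi_def, ← hlo_def] at h1
      rw [← h1]; ring
    have hdiv2 : a / p ^ e = p * hi + lo / p ^ e := by
      rw [key, Nat.mul_add_div hpe]
    have hmod2 : a % p ^ e = lo % p ^ e := by
      rw [key, Nat.mul_add_mod]
    have hXdiv : (hi + lo * p ^ h) / p ^ (m - 1) = lo / p ^ e := by
      rw [hm1, ← Nat.div_div_eq_div_mul, Nat.add_mul_div_right _ _ hph,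
        Nat.div_eq_of_lt hhi, zero_add]
    have hsmall : hi + lo % p ^ e * p ^ h < p ^ h * p ^ e := by
      have h2 : lo % p ^ e < p ^ e := Nat.mod_lt _ hpe
      calc hi + lo % p ^ e * p ^ h < p ^ h + lo % p ^ e * p ^ h := by omega
        _ = p ^ h * (1 + lo % p ^ e) := by ring
        _ ≤ p ^ h * p ^ e := Nat.mul_le_mul_left _ (by omega)
    have hXmod : (hi + lo * p ^ h) % p ^ (m - 1) = hi + lo % p ^ e * p ^ h := by
      have keyb : hi + lo * p ^ h = (hi + lo % p ^ e * p ^ h) + lo / p ^ e * (p ^ h * p ^ e) := by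
        conv_lhs => rw [← Nat.div_add_mod lo (p ^ e)]
        ring
      rw [hm1, keyb, Nat.add_mul_mod_self_right, Nat.mod_eq_of_lt hsmall]
    show (hi + lo * p ^ h) / p ^ (m - 1) + (hi + lo * p ^ h) % p ^ (m - 1) * p
        = a / p ^ e + a % p ^ e * p ^ (h + 1)
    rw [hXdiv, hXmod, hdiv2, hmod2, pow_succ]
    ring

lemma tauTop (p m : ℕ) (hp : 2 ≤ p) (a : ℕ) (ha : a < p ^ m) (h : ℕ) (hh : h < m) :
    (tau p m)^[h] a / p ^ (m - 1) = a / p ^ (m - 1 - h) % p := by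
  rw [tauA p m hp a ha h (le_of_lt hh)]
  obtain ⟨e, he⟩ : ∃ e, m - h = e + 1 := ⟨m - h - 1, by omega⟩
  have hme : m - 1 - h = e := by omega
  have hpow : p ^ (m - h) = p ^ e * p := by rw [he, pow_succ]
  have hm1 : p ^ (m - 1) = p ^ h * p ^ e := by rw [← pow_add]; congr 1; omega
  have hph : 0 < p ^ h := pow_pos (by omega) h
  have hhi : a / (p ^ e * p) < p ^ h := by
    apply Nat.div_lt_of_lt_mul
    calc a < p ^ m := ha
      _ = p ^ e * p * p ^ h := by rw [← pow_succ, ← pow_add]; congr 1; omega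
  rw [hpow, hme, hm1, ← Nat.div_div_eq_div_mul, Nat.add_mul_div_right _ _ hph,
    Nat.div_eq_of_lt hhi, zero_add]
  exact Nat.mod_mul_right_div_self a _ _

lemma tauM (p m : ℕ) (hp : 2 ≤ p) (a : ℕ) (ha : a < p ^ m) : (tau p m)^[m] a = a := by
  rw [tauA p m hp a ha m le_rfl]
  simp [Nat.sub_self, Nat.mod_one]

lemma tauStep (p m : ℕ) (hp : 2 ≤ p) (hm : 0 < m) (b : ℕ) :
    p * b = tau p m b + (p ^ m - 1) * (b / p ^ (m - 1)) := by
  have h1 := Nat.div_add_mod b (p ^ (m - 1))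
  have h2 : p ^ (m - 1) * p = p ^ m := by rw [← pow_succ]; congr 1; omega
  unfold tau
  have h3 : (p ^ m - 1) * (b / p ^ (m - 1)) = p ^ m * (b / p ^ (m - 1)) - b / p ^ (m - 1) := by
    rw [Nat.sub_mul, one_mul]
  have h4 : b / p ^ (m - 1) ≤ p ^ m * (b / p ^ (m - 1)) :=
    Nat.le_mul_of_pos_left _ (pow_pos (by omega) m)
  have h5 : p * b = p ^ m * (b / p ^ (m - 1)) + b % p ^ (m - 1) * p := by
    calc p * b = p * (p ^ (m - 1) * (b / p ^ (m - 1)) + b % p ^ (m - 1)) := by rw [h1]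
      _ = p ^ (m - 1) * p * (b / p ^ (m - 1)) + b % p ^ (m - 1) * p := by ring
      _ = _ := by rw [h2]
  omega

lemma main_id (p m : ℕ) (hp : 2 ≤ p) (hm : 0 < m) (a : ℕ) (ha : a < p ^ m) :
    (p - 1) * ∑ h ∈ Finset.range m, (tau p m)^[h] a
      = (p ^ m - 1) * ∑ j ∈ Finset.range m, a / p ^ j % p := by
  have hstep : ∀ h ∈ Finset.range m, p * (tau p m)^[h] a
      = (tau p m)^[h + 1] a + (p ^ m - 1) * (a / p ^ (m - 1 - h) % p) := by
    intro h hh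
    rw [Function.iterate_succ_apply', ← tauTop p m hp a ha h (Finset.mem_range.mp hh)]
    exact tauStep p m hp hm _
  have hS : ∑ h ∈ Finset.range m, p * (tau p m)^[h] a
      = ∑ h ∈ Finset.range m, (tau p m)^[h + 1] a
        + (p ^ m - 1) * ∑ h ∈ Finset.range m, (a / p ^ (m - 1 - h) % p) := by
    rw [Finset.sum_congr rfl hstep, Finset.sum_add_distrib, Finset.mul_sum]
  have hshift : ∑ h ∈ Finset.range m, (tau p m)^[h + 1] a
      = ∑ h ∈ Finset.range m, (tau p m)^[h] a := by
    have h1 := Finset.sum_range_succ' (fun h => (tau p m)^[h] a) m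
    have h2 := Finset.sum_range_succ (fun h => (tau p m)^[h] a) m
    have h3 : (tau p m)^[m] a = a := tauM p m hp a ha
    simp only [Function.iterate_zero, id_eq, h3] at h1 h2
    omega
  have hrefl : ∑ h ∈ Finset.range m, (a / p ^ (m - 1 - h) % p)
      = ∑ j ∈ Finset.range m, a / p ^ j % p :=
    Finset.sum_range_reflect (fun j => a / p ^ j % p) m
  rw [hshift, hrefl] at hS
  rw [← Finset.mul_sum] at hS
  have h6 : (p - 1) * ∑ h ∈ Finset.range m, (tau p m)^[h] a
      = p * ∑ h ∈ Finset.range m, (tau p m)^[h] a - ∑ h ∈ Finset.range m, (tau p m)^[h] a := by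
    rw [Nat.sub_mul, one_mul]
  omega

lemma digitSum (p : ℕ) (hp : 2 ≤ p) : ∀ m a, a < p ^ m →
    (Nat.digits p a).sum = ∑ j ∈ Finset.range m, a / p ^ j % p := by
  intro m
  induction m with
  | zero => intro a ha; rw [pow_zero] at ha; interval_cases a; simp
  | succ m ih =>
    intro a ha
    rcases Nat.eq_zero_or_pos a with rfl | hapos
    · simp
    · rw [Nat.digits_def' (by omega : 1 < p) hapos]
      simp only [List.sum_cons]
      rw [ih (a / p) (Nat.div_lt_of_lt_mul (by rwa [← pow_succ'] ))]
      rw [Finset.sum_range_succ']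
      simp only [pow_zero, Nat.div_one]
      rw [add_comm]
      congr 1
      apply Finset.sum_congr rfl
      intro j _
      rw [Nat.div_div_eq_div_mul, ← pow_succ']

/-- If `Σ_u τ^h(i(u)) ≥ (q-1)K` for all `0 ≤ h ≤ m-1`, then `Σ_u s(i(u)) ≥ m(p-1)K`,
where `s` is the base-`p` digit sum. -/
theorem stmt4 (p m K : ℕ) (hp : p.Prime) (hm : 0 < m) (hK : 0 < K)
    (ι : Type*) [Fintype ι] (i : ι → ℕ) (hi : ∀ u, i u < p ^ m)
    (h : ∀ h' < m, (p ^ m - 1) * K ≤ ∑ u, (tau p m)^[h'] (i u)) :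
    m * (p - 1) * K ≤ ∑ u, (Nat.digits p (i u)).sum := by
  have hp2 : 2 ≤ p := hp.two_le
  have hq1 : 1 < p ^ m := Nat.one_lt_pow (by omega) (by omega)
  have hq : 0 < p ^ m - 1 := by omega
  have key : ∀ u, (p - 1) * ∑ h' ∈ Finset.range m, (tau p m)^[h'] (i u)
      = (p ^ m - 1) * (Nat.digits p (i u)).sum := by
    intro u
    rw [main_id p m hp2 hm (i u) (hi u), digitSum p hp2 m (i u) (hi u)]
  have hsum : (p - 1) * ∑ h' ∈ Finset.range m, ∑ u, (tau p m)^[h'] (i u)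
      = (p ^ m - 1) * ∑ u, (Nat.digits p (i u)).sum := by
    rw [Finset.sum_comm, Finset.mul_sum]
    rw [Finset.sum_congr rfl (fun u _ => key u), ← Finset.mul_sum]
  have hlow : m * ((p ^ m - 1) * K) ≤ ∑ h' ∈ Finset.range m, ∑ u, (tau p m)^[h'] (i u) := by
    calc m * ((p ^ m - 1) * K) = ∑ _h' ∈ Finset.range m, (p ^ m - 1) * K := by
          rw [Finset.sum_const, Finset.card_range, smul_eq_mul]
      _ ≤ _ := Finset.sum_le_sum (fun h' hh' => h h' (Finset.mem_range.mp hh'))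
  have hfinal : (p ^ m - 1) * (m * (p - 1) * K) ≤ (p ^ m - 1) * ∑ u, (Nat.digits p (i u)).sum := by
    calc (p ^ m - 1) * (m * (p - 1) * K) = (p - 1) * (m * ((p ^ m - 1) * K)) := by ring
      _ ≤ (p - 1) * ∑ h' ∈ Finset.range m, ∑ u, (tau p m)^[h'] (i u) :=
          Nat.mul_le_mul_left _ hlow
      _ = _ := hsum
  exact Nat.le_of_mul_le_mul_left hfinal hq
end

section
/- Let p be a prime, q = p^m, n ≥ 1, d ≥ 2, and let i : U_d → {0,...,q-1} satisfy that Σ_u i(u)·u ≡ 0 (mod q-1) componentwise and i is not identically zero. Let k be the number of nonzero components of Σ_u i(u)·u. Then Σ_u s(i(u)) + m(p-1)(n-k) ≥ m(p-1)⌈n/d⌉, where s denotes the base-p digit sum. -/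
open Finset

-- list getD sum lemmas
lemma list_sum_getD (L : List ℕ) : ∀ m, L.length ≤ m →
    ∑ s ∈ range m, L.getD s 0 = L.sum := by
  induction L with
  | nil => intro m _; simp
  | cons a tl ih =>
    intro m hm
    cases m with
    | zero => simp at hm
    | succ m' =>
      rw [Finset.sum_range_succ']
      simp only [List.getD_cons_succ, List.getD_cons_zero, List.sum_cons]
      rw [ih m' (by simpa using hm)]
      ring

lemma ofDigits_getD (p : ℕ) (L : List ℕ) : ∀ m, L.length ≤ m →
    (Nat.ofDigits p L : ℕ) = ∑ s ∈ range m, L.getD s 0 * p ^ s := by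
  induction L with
  | nil => intro m _; simp [Nat.ofDigits]
  | cons a tl ih =>
    intro m hm
    cases m with
    | zero => simp at hm
    | succ m' =>
      rw [Finset.sum_range_succ']
      simp only [List.getD_cons_succ, List.getD_cons_zero, pow_zero, mul_one,
        Nat.ofDigits_cons]
      rw [ih m' (by simpa using hm), Finset.mul_sum]
      rw [add_comm]
      congr 1
      refine Finset.sum_congr rfl fun s _ => ?_
      rw [pow_succ]
      ring

lemma digits_len_le (p a m : ℕ) (hp : 1 < p) (ha : a < p ^ m) :
    (Nat.digits p a).length ≤ m := by
  rcases Nat.eq_zero_or_pos a with rfl | ha0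
  · simp
  · rw [Nat.digits_len p a hp ha0.ne']
    exact Nat.log_lt_of_lt_pow ha0.ne' ha

-- rotation by one
lemma sum_range_rot1 (m : ℕ) (g : ℕ → ℕ) :
    ∑ s ∈ range m, g ((s + 1) % m) = ∑ s ∈ range m, g (s % m) := by
  cases m with
  | zero => simp
  | succ m' =>
    rw [Finset.sum_range_succ, Finset.sum_range_succ']
    simp [Nat.mod_self]

lemma sum_range_rotate (m : ℕ) (g : ℕ → ℕ) (t : ℕ) :
    ∑ s ∈ range m, g ((s + t) % m) = ∑ s ∈ range m, g (s % m) := by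
  induction t with
  | zero => simp
  | succ t ih =>
    have h1 : ∀ s, (s + (t + 1)) % m = ((s + 1) % m + t) % m := by
      intro s
      rw [Nat.mod_add_mod]
      congr 1
      ring
    calc ∑ s ∈ range m, g ((s + (t+1)) % m)
        = ∑ s ∈ range m, (fun x => g ((x + t) % m)) ((s + 1) % m) := by
          refine Finset.sum_congr rfl fun s _ => ?_
          simp only
          rw [h1]
      _ = ∑ s ∈ range m, (fun x => g ((x + t) % m)) (s % m) := by
          exact sum_range_rot1 m (fun x => g ((x + t) % m))
      _ = ∑ s ∈ range m, g ((s + t) % m) := by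
          refine Finset.sum_congr rfl fun s hs => ?_
          simp only
          rw [Nat.mod_add_mod]
      _ = ∑ s ∈ range m, g (s % m) := ih

/-- cyclic shift of the base-`p` digits of `a` by `t` positions (within `m` digits). -/
def shiftRep (p m t a : ℕ) : ℕ :=
  ∑ s ∈ range m, (Nat.digits p a).getD s 0 * p ^ ((s + t) % m)

lemma geom_aux (p : ℕ) (hp : 1 ≤ p) (m : ℕ) :
    (p - 1) * ∑ r ∈ range m, p ^ r + 1 = p ^ m := by
  induction m with
  | zero => simp
  | succ m ih =>
    rw [Finset.sum_range_succ, Nat.mul_add]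
    calc (p-1) * ∑ r ∈ range m, p ^ r + (p-1) * p ^ m + 1
        = ((p-1) * ∑ r ∈ range m, p ^ r + 1) + (p-1) * p ^ m := by ring
      _ = p ^ m + (p-1) * p ^ m := by rw [ih]
      _ = (1 + (p-1)) * p ^ m := by ring
      _ = p ^ (m+1) := by
          rw [show 1 + (p-1) = p from by omega, pow_succ, mul_comm]

-- expansion of a
lemma eq_sum_shift0 (p m a : ℕ) (hp : 1 < p) (ha : a < p ^ m) :
    a = ∑ s ∈ range m, (Nat.digits p a).getD s 0 * p ^ s := by
  conv_lhs => rw [← Nat.ofDigits_digits p a]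
  rw [ofDigits_getD p _ m (digits_len_le p a m hp ha)]

lemma cast_p_pow_m (p m : ℕ) (hp : 1 ≤ p) :
    ((p : ZMod (p ^ m - 1)))^m = 1 := by
  have h1 : ((p ^ m : ℕ) : ZMod (p ^ m - 1)) = ((p ^ m - 1 : ℕ) : ZMod (p ^ m - 1)) + 1 := by
    rw [show p ^ m = (p ^ m - 1) + 1 from by
      have : 1 ≤ p ^ m := Nat.one_le_pow _ _ (by omega); omega]
    push_cast
    ring
  rw [← Nat.cast_pow, h1, ZMod.natCast_self, zero_add]

lemma cast_p_pow_mod (p m e : ℕ) (hp : 1 ≤ p) :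
    ((p : ZMod (p ^ m - 1)))^(e % m) = ((p : ZMod (p ^ m - 1)))^e := by
  conv_rhs => rw [show e = m * (e / m) + e % m from by
    have := Nat.div_add_mod e m; omega]
  rw [pow_add, pow_mul, cast_p_pow_m p m hp, one_pow, one_mul]

lemma shiftRep_modEq (p m t a : ℕ) (hp : 1 < p) (ha : a < p ^ m) :
    Nat.ModEq (p ^ m - 1) (shiftRep p m t a) (p ^ t * a) := by
  rw [← ZMod.natCast_eq_natCast_iff]
  unfold shiftRep
  conv_rhs => rw [eq_sum_shift0 p m a hp ha]
  push_cast
  rw [Finset.mul_sum]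
  refine Finset.sum_congr rfl fun s _ => ?_
  rw [cast_p_pow_mod p m (s + t) (by omega), pow_add]
  ring

lemma shiftRep_pos (p m t a : ℕ) (hp : 1 < p) (ha : a < p ^ m) (ha0 : a ≠ 0) :
    0 < shiftRep p m t a := by
  rcases Nat.eq_zero_or_pos (shiftRep p m t a) with h | h
  · exfalso
    apply ha0
    have hall := Finset.sum_eq_zero_iff.mp h
    rw [eq_sum_shift0 p m a hp ha]
    refine Finset.sum_eq_zero fun s hs => ?_
    have := hall s hs
    have hp0 : p ^ ((s + t) % m) ≠ 0 := pow_ne_zero _ (by omega)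
    have : (Nat.digits p a).getD s 0 = 0 := by
      rcases Nat.mul_eq_zero.mp this with h' | h'
      · exact h'
      · exact absurd h' hp0
    rw [this, zero_mul]
  · exact h

lemma shiftRep_le (p m t a : ℕ) (hp : 1 < p) (ha : a < p ^ m) :
    shiftRep p m t a ≤ p ^ m - 1 := by
  have h1 : shiftRep p m t a ≤ ∑ s ∈ range m, (p - 1) * p ^ ((s + t) % m) := by
    refine Finset.sum_le_sum fun s _ => ?_
    refine Nat.mul_le_mul_right _ ?_
    rcases lt_or_ge s (Nat.digits p a).length with hs | hs
    · rw [List.getD_eq_getElem _ _ hs]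
      exact Nat.le_sub_one_of_lt (Nat.digits_lt_base hp (List.getElem_mem hs))
    · rw [List.getD_eq_default _ _ hs]
      omega
  refine h1.trans ?_
  rw [← Finset.mul_sum, sum_range_rotate m (fun r => p ^ r) t]
  have h2 : ∑ s ∈ range m, p ^ (s % m) = ∑ s ∈ range m, p ^ s :=
    Finset.sum_congr rfl fun s hs => by rw [Nat.mod_eq_of_lt (Finset.mem_range.mp hs)]
  rw [h2]
  have := geom_aux p (by omega) m
  omega

lemma shiftRep_sum (p m a : ℕ) (hp : 1 < p) (ha : a < p ^ m) :
    (p - 1) * ∑ t ∈ range m, shiftRep p m t a = (p ^ m - 1) * (Nat.digits p a).sum := by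
  unfold shiftRep
  rw [Finset.sum_comm]
  have h1 : ∀ s ∈ range m, ∑ t ∈ range m, (Nat.digits p a).getD s 0 * p ^ ((s + t) % m)
      = (Nat.digits p a).getD s 0 * ∑ r ∈ range m, p ^ r := by
    intro s _
    rw [← Finset.mul_sum]
    congr 1
    have : ∑ t ∈ range m, p ^ ((s + t) % m) = ∑ t ∈ range m, p ^ ((t + s) % m) :=
      Finset.sum_congr rfl fun t _ => by rw [Nat.add_comm]
    rw [this, sum_range_rotate m (fun r => p ^ r) s]
    exact Finset.sum_congr rfl fun t ht => by rw [Nat.mod_eq_of_lt (Finset.mem_range.mp ht)]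
  rw [Finset.sum_congr rfl h1, ← Finset.sum_mul, ← list_sum_getD _ m (digits_len_le p a m hp ha)]
  have hg := geom_aux p (by omega) m
  have hr : (p:ℕ) - 1 ≠ 0 := by omega
  calc (p-1) * ((∑ s ∈ range m, (Nat.digits p a).getD s 0) * ∑ r ∈ range m, p ^ r)
      = ((p-1) * ∑ r ∈ range m, p ^ r) * ∑ s ∈ range m, (Nat.digits p a).getD s 0 := by ring
    _ = (p ^ m - 1) * ∑ s ∈ range m, (Nat.digits p a).getD s 0 := by rw [show (p-1) * ∑ r ∈ range m, p ^ r = p ^ m - 1 from by omega]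

/-- If `i : U_d → {0,…,q-1}` is not identically zero, `Σ_u i(u)` and each component of
`Σ_u i(u)·u` are divisible by `q - 1`, and `k` is the number of nonzero components of
`Σ_u i(u)·u`, then `Σ_u s(i(u)) + m(p-1)(n-k) ≥ m(p-1)⌈n/d⌉`. -/
theorem stmt8 (p m n d : ℕ) (hp : p.Prime) (hm : 0 < m) (hn : 1 ≤ n) (hd : 2 ≤ d)
    (i : (Fin n → ℕ) →₀ ℕ)
    (hsupp : ∀ u ∈ i.support, ∑ j, u j ≤ d)
    (hval : ∀ u, i u < p ^ m) (hne : i ≠ 0)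
    (hdvd0 : (p ^ m - 1) ∣ ∑ u ∈ i.support, i u)
    (hdvd : ∀ j : Fin n, (p ^ m - 1) ∣ ∑ u ∈ i.support, i u * u j) :
    m * (p - 1) * ⌈(n : ℚ) / (d : ℚ)⌉₊ ≤
      (∑ u ∈ i.support, (Nat.digits p (i u)).sum) +
        m * (p - 1) *
          (n - (Finset.univ.filter fun j : Fin n =>
            (∑ u ∈ i.support, i u * u j) ≠ 0).card) := by
  have hp2 : 1 < p := hp.one_lt
  set N := p ^ m - 1 with hN
  have hN1 : 1 ≤ N := by
    have : p ≤ p ^ m := Nat.le_self_pow (by omega) p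
    omega
  set J := Finset.univ.filter fun j : Fin n => (∑ u ∈ i.support, i u * u j) ≠ 0 with hJ
  set k := J.card with hk
  have hkn : k ≤ n := by
    calc k ≤ Finset.univ.card := Finset.card_filter_le _ _
      _ = n := by simp
  -- step 1 : per-shift lower bound
  have key : ∀ t, ⌈(k : ℚ) / (d : ℚ)⌉₊ * N ≤ ∑ u ∈ i.support, shiftRep p m t (i u) := by
    intro t
    set St := ∑ u ∈ i.support, shiftRep p m t (i u) with hSt
    have hdvdSt : N ∣ St := by
      have h1 : Nat.ModEq N St (p ^ t * ∑ u ∈ i.support, i u) := by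
        rw [hSt, ← ZMod.natCast_eq_natCast_iff]
        push_cast
        rw [Finset.mul_sum]
        refine Finset.sum_congr rfl fun u _ => ?_
        have := shiftRep_modEq p m t (i u) hp2 (hval u)
        rw [← ZMod.natCast_eq_natCast_iff] at this
        push_cast at this
        exact this
      exact (Nat.modEq_zero_iff_dvd).mp
        (h1.trans ((Nat.modEq_zero_iff_dvd).mpr (Dvd.dvd.mul_left hdvd0 _)))
    have hkd : k * N ≤ d * St := by
      have hbound : ∀ j ∈ J, N ≤ ∑ u ∈ i.support, shiftRep p m t (i u) * u j := by
        intro j hj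
        have hjne : (∑ u ∈ i.support, i u * u j) ≠ 0 := (Finset.mem_filter.mp hj).2
        -- divisibility of the shifted column sum
        have hdvdj : N ∣ ∑ u ∈ i.support, shiftRep p m t (i u) * u j := by
          have h1 : Nat.ModEq N (∑ u ∈ i.support, shiftRep p m t (i u) * u j)
              (p ^ t * ∑ u ∈ i.support, i u * u j) := by
            rw [← ZMod.natCast_eq_natCast_iff]
            push_cast
            rw [Finset.mul_sum]
            refine Finset.sum_congr rfl fun u _ => ?_
            have := shiftRep_modEq p m t (i u) hp2 (hval u)
            rw [← ZMod.natCast_eq_natCast_iff] at this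
            push_cast at this
            rw [← mul_assoc, ← this]
          exact (Nat.modEq_zero_iff_dvd).mp
            (h1.trans ((Nat.modEq_zero_iff_dvd).mpr (Dvd.dvd.mul_left (hdvd j) _)))
        -- positivity
        obtain ⟨u, hu, hune⟩ := Finset.exists_ne_zero_of_sum_ne_zero hjne
        have hpos : 0 < ∑ u ∈ i.support, shiftRep p m t (i u) * u j := by
          refine Finset.sum_pos' (fun v _ => Nat.zero_le _) ⟨u, hu, ?_⟩
          have hiu : i u ≠ 0 := fun h => hune (by rw [h, zero_mul])
          have huj : 0 < u j := Nat.pos_of_ne_zero fun h => hune (by rw [h, mul_zero])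
          exact Nat.mul_pos (shiftRep_pos p m t (i u) hp2 (hval u) hiu) huj
        exact Nat.le_of_dvd hpos hdvdj
      calc k * N = ∑ _j ∈ J, N := by rw [Finset.sum_const, smul_eq_mul]
        _ ≤ ∑ j ∈ J, ∑ u ∈ i.support, shiftRep p m t (i u) * u j :=
            Finset.sum_le_sum hbound
        _ ≤ ∑ j : Fin n, ∑ u ∈ i.support, shiftRep p m t (i u) * u j :=
            Finset.sum_le_sum_of_subset (Finset.filter_subset _ _)
        _ = ∑ u ∈ i.support, shiftRep p m t (i u) * ∑ j, u j := by
            rw [Finset.sum_comm]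
            exact Finset.sum_congr rfl fun u _ => by rw [Finset.mul_sum]
        _ ≤ ∑ u ∈ i.support, shiftRep p m t (i u) * d :=
            Finset.sum_le_sum fun u hu => Nat.mul_le_mul_left _ (hsupp u hu)
        _ = d * St := by rw [← Finset.sum_mul, mul_comm]
    -- conclude
    obtain ⟨c, hc⟩ := hdvdSt
    have hkc : k ≤ d * c := by
      rw [hc] at hkd
      have : k * N ≤ (d * c) * N := by calc k * N ≤ d * (N * c) := hkd
                                         _ = (d * c) * N := by ring
      exact Nat.le_of_mul_le_mul_right this (by omega)
    have hceil : ⌈(k : ℚ) / (d : ℚ)⌉₊ ≤ c := by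
      rw [Nat.ceil_le, div_le_iff₀ (by positivity)]
      calc (k : ℚ) ≤ (d * c : ℕ) := by exact_mod_cast hkc
        _ = (c : ℚ) * d := by push_cast; ring
    calc ⌈(k : ℚ) / (d : ℚ)⌉₊ * N ≤ c * N := Nat.mul_le_mul_right _ hceil
      _ = St := by rw [hc]; ring
  -- step 2 : digit sums
  have hdig : m * (p - 1) * ⌈(k : ℚ) / (d : ℚ)⌉₊ ≤ ∑ u ∈ i.support, (Nat.digits p (i u)).sum := by
    have h1 : N * (∑ u ∈ i.support, (Nat.digits p (i u)).sum)
        = (p - 1) * ∑ t ∈ range m, ∑ u ∈ i.support, shiftRep p m t (i u) := by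
      rw [Finset.sum_comm, Finset.mul_sum, Finset.mul_sum]
      refine Finset.sum_congr rfl fun u _ => ?_
      rw [mul_comm (N : ℕ)]
      exact ((shiftRep_sum p m (i u) hp2 (hval u)).trans (mul_comm _ _)).symm
    have h2 : (p-1) * (m * (⌈(k : ℚ) / (d : ℚ)⌉₊ * N)) ≤
        (p - 1) * ∑ t ∈ range m, ∑ u ∈ i.support, shiftRep p m t (i u) := by
      refine Nat.mul_le_mul_left _ ?_
      calc m * (⌈(k : ℚ) / (d : ℚ)⌉₊ * N) = ∑ _t ∈ range m, ⌈(k : ℚ) / (d : ℚ)⌉₊ * N := by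
            rw [Finset.sum_const, Finset.card_range, smul_eq_mul]
        _ ≤ _ := Finset.sum_le_sum fun t _ => key t
    rw [← h1] at h2
    have : m * (p-1) * ⌈(k : ℚ) / (d : ℚ)⌉₊ * N ≤ (∑ u ∈ i.support, (Nat.digits p (i u)).sum) * N := by
      calc m * (p-1) * ⌈(k : ℚ) / (d : ℚ)⌉₊ * N = (p-1) * (m * (⌈(k : ℚ) / (d : ℚ)⌉₊ * N)) := by ring
        _ ≤ N * (∑ u ∈ i.support, (Nat.digits p (i u)).sum) := h2
        _ = _ := by ring
    exact Nat.le_of_mul_le_mul_right this (by omega)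
  -- step 3 : ceiling inequality
  have hceil2 : ⌈(n : ℚ) / (d : ℚ)⌉₊ ≤ ⌈(k : ℚ) / (d : ℚ)⌉₊ + (n - k) := by
    have hdq : (0:ℚ) < d := by positivity
    have h1 : (n : ℚ) / d ≤ (k : ℚ) / d + ((n - k : ℕ) : ℚ) := by
      rw [div_add' _ _ _ (ne_of_gt hdq), div_le_div_iff₀ hdq hdq]
      have : ((n - k : ℕ) : ℚ) * d ≥ ((n - k : ℕ) : ℚ) * 1 := by
        refine mul_le_mul_of_nonneg_left ?_ (by positivity)
        exact_mod_cast (by omega : (1:ℕ) ≤ d)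
      have hcast : ((n - k : ℕ) : ℚ) = (n : ℚ) - (k : ℚ) := by
        rw [Nat.cast_sub hkn]
      nlinarith [hcast]
    calc ⌈(n : ℚ) / (d : ℚ)⌉₊ ≤ ⌈(k : ℚ) / d + ((n - k : ℕ) : ℚ)⌉₊ := Nat.ceil_le_ceil h1
      _ = ⌈(k : ℚ) / (d : ℚ)⌉₊ + (n - k) := Nat.ceil_add_natCast (by positivity) _
  calc m * (p - 1) * ⌈(n : ℚ) / (d : ℚ)⌉₊
      ≤ m * (p - 1) * (⌈(k : ℚ) / (d : ℚ)⌉₊ + (n - k)) :=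
        Nat.mul_le_mul_left _ hceil2
    _ = m * (p - 1) * ⌈(k : ℚ) / (d : ℚ)⌉₊ + m * (p - 1) * (n - k) := by ring
    _ ≤ (∑ u ∈ i.support, (Nat.digits p (i u)).sum) + m * (p - 1) * (n - k) :=
        Nat.add_le_add_right hdig _
end

section
/- Let q = 2^m, n ≥ 4 even, d = n/2. Let I be the set of functions i : U_{n/2} → {0,...,q-1} such that every component of Σ_u i(u)·u is a positive multiple of q-1, and Σ_u i(u)^{(j)} = 2 for all binary digit positions 0 ≤ j ≤ m-1. Then i ∈ I if and only if there exist u_j, v_j ∈ {0,1}^n for 0 ≤ j ≤ m-1 with |u_j| = |v_j| = n/2 and u_j + v_j = (1,...,1), such that for each j: i(u_j)^{(j)} = i(v_j)^{(j)} = 1 and i(u)^{(j)} = 0 for all u ∈ U_{n/2} \ {u_j, v_j}. -/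
open Finset

lemma digit_expand : ∀ m a : ℕ, a < 2^m → ∑ j ∈ Finset.range m, 2^j * (a / 2^j % 2) = a := by
  intro m
  induction m with
  | zero => intro a ha; interval_cases a; simp
  | succ m ih =>
    intro a ha
    rw [Finset.sum_range_succ']
    have h2 : a / 2 < 2^m := by
      rw [Nat.div_lt_iff_lt_mul two_pos]
      calc a < 2^(m+1) := ha
        _ = 2^m * 2 := by ring
    have hih := ih (a/2) h2
    have key : ∀ j, 2^(j+1) * (a / 2^(j+1) % 2) = 2 * (2^j * ((a/2) / 2^j % 2)) := by
      intro j
      rw [pow_succ, Nat.div_div_eq_div_mul, mul_comm 2 (2^j)]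
      ring
    calc (∑ j ∈ Finset.range m, 2^(j+1) * (a / 2^(j+1) % 2)) + 2^0 * (a / 2^0 % 2)
        = (∑ j ∈ Finset.range m, 2 * (2^j * ((a/2) / 2^j % 2))) + a % 2 := by
          simp [key]
      _ = 2 * (a/2) + a % 2 := by rw [← Finset.mul_sum, hih]
      _ = a := by omega

lemma geom2 : ∀ m : ℕ, ∑ j ∈ Finset.range m, 2^j = 2^m - 1 := by
  intro m
  induction m with
  | zero => simp
  | succ m ih =>
    rw [Finset.sum_range_succ, ih]
    have : 0 < 2^m := pow_pos two_pos m
    rw [pow_succ]; omega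

lemma digits_one (n : ℕ) :
    ∀ m (a : ℕ → Fin n → ℕ),
      (∀ l, ∑ j ∈ Finset.range m, 2^j * a j l = 2^m - 1) →
      (∀ j < m, ∑ l, a j l = n) →
      ∀ j < m, ∀ l, a j l = 1 := by
  intro m
  induction m with
  | zero => intro a _ _ j hj; omega
  | succ m ih =>
    intro a h1 h2
    have hp : 0 < (2:ℕ)^m := pow_pos two_pos m
    have top : ∀ l, a m l ≤ 1 := by
      intro l
      have hle : 2^m * a m l ≤ 2^(m+1) - 1 := by
        rw [← h1 l]
        exact Finset.single_le_sum (f := fun j => 2^j * a j l) (fun _ _ => Nat.zero_le _)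
          (Finset.self_mem_range_succ m)
      have h2m : (2:ℕ)^(m+1) = 2^m * 2 := by ring
      by_contra hc
      push_neg at hc
      have : 2^m * 2 ≤ 2^m * a m l := Nat.mul_le_mul_left _ hc
      omega
    have topeq : ∀ l, a m l = 1 := by
      intro l
      have hsum : ∑ l, a m l = ∑ _l : Fin n, 1 := by
        rw [h2 m (Nat.lt_succ_self m)]; simp
      have := (Finset.sum_eq_sum_iff_of_le (fun l _ => top l)).mp hsum
      exact this l (Finset.mem_univ l)
    have h1' : ∀ l, ∑ j ∈ Finset.range m, 2^j * a j l = 2^m - 1 := by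
      intro l
      have := h1 l
      rw [Finset.sum_range_succ, topeq l, mul_one] at this
      have h2m : (2:ℕ)^(m+1) = 2^m * 2 := by ring
      omega
    intro j hj l
    rcases Nat.lt_succ_iff_lt_or_eq.mp hj with h | h
    · exact ih a h1' (fun j hj => h2 j (Nat.lt_succ_of_lt hj)) j h l
    · subst h; exact topeq l

/-- Lemma 3.1: for `q = 2^m`, `n ≥ 4` even, `d = n/2`, a function
`i : U_{n/2} → {0,…,q-1}` satisfies (i) every component of `Σ_u i(u)·u` is a positive
multiple of `q-1` and (ii) `Σ_u i(u)^{(j)} = 2` for all `j < m`, iff there exist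
`u_j, v_j ∈ {0,1}^n` with `|u_j| = |v_j| = n/2`, `u_j + v_j = (1,…,1)`, such that for each
`j` the `j`-th digit of `i` is `1` exactly at `u_j` and `v_j` and `0` elsewhere on `U_{n/2}`. -/
theorem stmt9 (m n : ℕ) (hm : 0 < m) (hn : 4 ≤ n) (heven : Even n)
    (i : (Fin n → ℕ) →₀ ℕ)
    (hsupp : ∀ u ∈ i.support, ∑ l, u l ≤ n / 2)
    (hval : ∀ u, i u < 2 ^ m) :
    ((∀ l : Fin n, ∃ c > 0, ∑ u ∈ i.support, i u * u l = c * (2 ^ m - 1)) ∧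
      ∀ j < m, ∑ u ∈ i.support, (i u / 2 ^ j % 2) = 2)
    ↔ ∃ uu vv : Fin m → (Fin n → ℕ),
        ∀ j : Fin m,
          (∀ l, uu j l ≤ 1) ∧ (∀ l, vv j l ≤ 1) ∧
          (∑ l, uu j l = n / 2) ∧ (∑ l, vv j l = n / 2) ∧
          (∀ l, uu j l + vv j l = 1) ∧
          i (uu j) / 2 ^ (j : ℕ) % 2 = 1 ∧ i (vv j) / 2 ^ (j : ℕ) % 2 = 1 ∧
          ∀ u : Fin n → ℕ, (∑ l, u l ≤ n / 2) → u ≠ uu j → u ≠ vv j →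
            i u / 2 ^ (j : ℕ) % 2 = 0 := by
  obtain ⟨k, hk⟩ := heven
  have hk2 : n / 2 = k := by omega
  have hdle : ∀ (u : Fin n → ℕ) (j : ℕ), i u / 2^j % 2 ≤ 1 :=
    fun u j => Nat.le_of_lt_succ (Nat.mod_lt _ two_pos)
  have hq : 0 < (2:ℕ)^m := pow_pos two_pos m
  -- digit decomposition of the inner sums (both directions use it)
  have hdecomp : ∀ l : Fin n, ∑ u ∈ i.support, i u * u l
      = ∑ j ∈ Finset.range m, 2^j * ∑ u ∈ i.support, (i u / 2^j % 2) * u l := by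
    intro l
    calc ∑ u ∈ i.support, i u * u l
        = ∑ u ∈ i.support, (∑ j ∈ Finset.range m, 2^j * (i u / 2^j % 2)) * u l := by
          exact Finset.sum_congr rfl fun u _ => by rw [digit_expand m (i u) (hval u)]
      _ = ∑ u ∈ i.support, ∑ j ∈ Finset.range m, 2^j * ((i u / 2^j % 2) * u l) := by
          exact Finset.sum_congr rfl fun u _ => by
            rw [Finset.sum_mul]
            exact Finset.sum_congr rfl fun j _ => mul_assoc _ _ _
      _ = ∑ j ∈ Finset.range m, ∑ u ∈ i.support, 2^j * ((i u / 2^j % 2) * u l) :=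
          Finset.sum_comm
      _ = ∑ j ∈ Finset.range m, 2^j * ∑ u ∈ i.support, (i u / 2^j % 2) * u l := by
          exact Finset.sum_congr rfl fun j _ => (Finset.mul_sum _ _ _).symm
  constructor
  · rintro ⟨h1, h2⟩
    -- exactly two elements with digit 1
    have hcard : ∀ j : Fin m,
        (i.support.filter (fun u => i u / 2^(j:ℕ) % 2 = 1)).card = 2 := by
      intro j
      rw [Finset.card_filter]
      have e : ∑ u ∈ i.support, (if i u / 2^(j:ℕ) % 2 = 1 then 1 else 0)
          = ∑ u ∈ i.support, (i u / 2^(j:ℕ) % 2) :=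
        Finset.sum_congr rfl fun u _ => by
          have := hdle u (j:ℕ); split <;> omega
      rw [e]
      exact h2 (j:ℕ) j.2
    have hpair : ∀ j : Fin m, ∃ a b, a ≠ b ∧
        i.support.filter (fun u => i u / 2^(j:ℕ) % 2 = 1) = {a, b} :=
      fun j => Finset.card_eq_two.mp (hcard j)
    choose uu vv hne hset using hpair
    have humem : ∀ j : Fin m, uu j ∈ i.support ∧ i (uu j) / 2^(j:ℕ) % 2 = 1 := by
      intro j
      have : uu j ∈ i.support.filter (fun u => i u / 2^(j:ℕ) % 2 = 1) := by
        rw [hset j]; simp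
      simpa using Finset.mem_filter.mp this
    have hvmem : ∀ j : Fin m, vv j ∈ i.support ∧ i (vv j) / 2^(j:ℕ) % 2 = 1 := by
      intro j
      have : vv j ∈ i.support.filter (fun u => i u / 2^(j:ℕ) % 2 = 1) := by
        rw [hset j]; simp
      simpa using Finset.mem_filter.mp this
    -- total weight of i
    have hsum_i : ∑ u ∈ i.support, i u = 2 * (2^m - 1) := by
      calc ∑ u ∈ i.support, i u
          = ∑ u ∈ i.support, ∑ j ∈ Finset.range m, 2^j * (i u / 2^j % 2) :=
            Finset.sum_congr rfl fun u _ => (digit_expand m (i u) (hval u)).symm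
        _ = ∑ j ∈ Finset.range m, ∑ u ∈ i.support, 2^j * (i u / 2^j % 2) :=
            Finset.sum_comm
        _ = ∑ j ∈ Finset.range m, 2^j * 2 := by
            refine Finset.sum_congr rfl fun j hj => ?_
            rw [← Finset.mul_sum, h2 j (Finset.mem_range.mp hj)]
        _ = 2 * (2^m - 1) := by rw [← Finset.sum_mul, geom2]; ring
    -- upper bound on the double sum
    have hS_le : ∑ l, ∑ u ∈ i.support, i u * u l ≤ n * (2^m - 1) := by
      rw [Finset.sum_comm]
      calc ∑ u ∈ i.support, ∑ l, i u * u l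
          = ∑ u ∈ i.support, i u * ∑ l, u l :=
            Finset.sum_congr rfl fun u _ => (Finset.mul_sum _ _ _).symm
        _ ≤ ∑ u ∈ i.support, i u * (n/2) :=
            Finset.sum_le_sum fun u hu => Nat.mul_le_mul_left _ (hsupp u hu)
        _ = (2*(2^m-1)) * (n/2) := by rw [← Finset.sum_mul, hsum_i]
        _ = n * (2^m - 1) := by rw [hk2]; subst hk; ring
    -- lower bound
    choose c hc hceq using h1
    have hge : ∀ l, 2^m - 1 ≤ ∑ u ∈ i.support, i u * u l := by
      intro l; rw [hceq l]; exact Nat.le_mul_of_pos_left _ (hc l)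
    have hconst : ∑ _l : Fin n, (2^m - 1) = n * (2^m - 1) := by
      rw [Finset.sum_const, Finset.card_univ, Fintype.card_fin, smul_eq_mul]
    have hSeq : ∑ l, ∑ u ∈ i.support, i u * u l = n * (2^m - 1) := by
      refine le_antisymm hS_le ?_
      rw [← hconst]
      exact Finset.sum_le_sum fun l _ => hge l
    have hinner : ∀ l, ∑ u ∈ i.support, i u * u l = 2^m - 1 := by
      have := (Finset.sum_eq_sum_iff_of_le
        (f := fun _l : Fin n => 2^m - 1) (fun l _ => hge l)).mp (by rw [hconst, hSeq])
      exact fun l => ((this l (Finset.mem_univ l))).symm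
    -- every support element has weight exactly n/2
    have hweight : ∀ u ∈ i.support, ∑ l, u l = n / 2 := by
      have hs1 : ∑ u ∈ i.support, i u * (∑ l, u l)
          = ∑ u ∈ i.support, i u * (n/2) := by
        have e1 : ∑ u ∈ i.support, i u * (∑ l, u l)
            = ∑ l, ∑ u ∈ i.support, i u * u l := by
          rw [Finset.sum_comm]
          exact Finset.sum_congr rfl fun u _ => Finset.mul_sum _ _ _
        rw [e1, hSeq, ← Finset.sum_mul, hsum_i, hk2]
        subst hk; ring
      have := (Finset.sum_eq_sum_iff_of_le
        (fun u hu => Nat.mul_le_mul_left (i u) (hsupp u hu))).mp hs1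
      intro u hu
      have hiu : i u ≠ 0 := Finsupp.mem_support_iff.mp hu
      exact Nat.eq_of_mul_eq_mul_left (Nat.pos_of_ne_zero hiu) (this u hu)
    clear hS_le hSeq
    -- A j l = uu j l + vv j l
    have hAeq : ∀ j : Fin m, ∀ l,
        (∑ u ∈ i.support, (i u / 2^(j:ℕ) % 2) * u l) = uu j l + vv j l := by
      intro j l
      have e : ∑ u ∈ i.support, (i u / 2^(j:ℕ) % 2) * u l
          = ∑ u ∈ i.support, (if i u / 2^(j:ℕ) % 2 = 1 then u l else 0) := by
        refine Finset.sum_congr rfl fun u _ => ?_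
        have := hdle u (j:ℕ)
        rcases Nat.le_one_iff_eq_zero_or_eq_one.mp this with h | h <;> simp [h]
      rw [e, ← Finset.sum_filter, hset j, Finset.sum_pair (hne j)]
    -- all components of uu j + vv j are 1
    have hA1 : ∀ j < m, ∀ l, (∑ u ∈ i.support, (i u / 2^j % 2) * u l) = 1 := by
      apply digits_one n m (fun j l => ∑ u ∈ i.support, (i u / 2^j % 2) * u l)
      · intro l
        rw [← hdecomp l, hinner l]
      · intro j hj
        have := hAeq ⟨j, hj⟩
        simp only at this
        calc ∑ l, ∑ u ∈ i.support, (i u / 2^j % 2) * u l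
            = ∑ l, (uu ⟨j, hj⟩ l + vv ⟨j, hj⟩ l) :=
              Finset.sum_congr rfl fun l _ => this l
          _ = (∑ l, uu ⟨j, hj⟩ l) + ∑ l, vv ⟨j, hj⟩ l := Finset.sum_add_distrib
          _ = n := by
              rw [hweight _ (humem ⟨j, hj⟩).1, hweight _ (hvmem ⟨j, hj⟩).1]
              omega
    refine ⟨uu, vv, fun j => ?_⟩
    have hone : ∀ l, uu j l + vv j l = 1 := by
      intro l
      rw [← hAeq j l]
      exact hA1 (j:ℕ) j.2 l
    refine ⟨fun l => by have := hone l; omega, fun l => by have := hone l; omega,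
      hweight _ (humem j).1, hweight _ (hvmem j).1, hone, (humem j).2, (hvmem j).2, ?_⟩
    intro u hu hne1 hne2
    by_contra hd
    have hd1 : i u / 2^(j:ℕ) % 2 = 1 := by have := hdle u (j:ℕ); omega
    have hiu : i u ≠ 0 := by
      intro h0; rw [h0] at hd1; simp at hd1
    have : u ∈ i.support.filter (fun u => i u / 2^(j:ℕ) % 2 = 1) :=
      Finset.mem_filter.mpr ⟨Finsupp.mem_support_iff.mpr hiu, hd1⟩
    rw [hset j] at this
    rcases Finset.mem_insert.mp this with h | h
    · exact hne1 h
    · exact hne2 (Finset.mem_singleton.mp h)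
  · rintro ⟨uu, vv, h⟩
    have hune : ∀ j : Fin m, uu j ≠ vv j := by
      intro j
      obtain ⟨hu1, hv1, hus, hvs, hone, hdu, hdv, hz⟩ := h j
      have : ∃ l, uu j l ≠ 0 := by
        by_contra hc
        push_neg at hc
        have : ∑ l, uu j l = 0 := Finset.sum_eq_zero fun l _ => hc l
        omega
      obtain ⟨l, hl⟩ := this
      intro he
      have := hone l
      rw [← he] at this
      omega
    have humem : ∀ j : Fin m, uu j ∈ i.support := by
      intro j
      obtain ⟨_, _, _, _, _, hdu, _, _⟩ := h j
      rw [Finsupp.mem_support_iff]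
      intro h0; rw [h0] at hdu; simp at hdu
    have hvmem : ∀ j : Fin m, vv j ∈ i.support := by
      intro j
      obtain ⟨_, _, _, _, _, _, hdv, _⟩ := h j
      rw [Finsupp.mem_support_iff]
      intro h0; rw [h0] at hdv; simp at hdv
    have hsub : ∀ j : Fin m, ({uu j, vv j} : Finset (Fin n → ℕ)) ⊆ i.support := by
      intro j x hx
      rcases Finset.mem_insert.mp hx with hh | hh
      · subst hh; exact humem j
      · rw [Finset.mem_singleton.mp hh]; exact hvmem j
    have hinner1 : ∀ j : Fin m, ∀ l,
        ∑ u ∈ i.support, (i u / 2^(j:ℕ) % 2) * u l = 1 := by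
      intro j l
      obtain ⟨_, _, _, _, hone, hdu, hdv, hz⟩ := h j
      rw [← Finset.sum_subset (hsub j) ?_]
      · rw [Finset.sum_pair (hune j), hdu, hdv, one_mul, one_mul, hone l]
      · intro u hu hnu
        have h1 : u ≠ uu j := fun he => hnu (by rw [he]; exact Finset.mem_insert_self _ _)
        have h2 : u ≠ vv j := fun he => hnu (by rw [he]; simp)
        rw [hz u (hsupp u hu) h1 h2, zero_mul]
    constructor
    · intro l
      refine ⟨1, one_pos, ?_⟩
      rw [one_mul, hdecomp l]
      calc ∑ j ∈ Finset.range m, 2^j * ∑ u ∈ i.support, (i u / 2^j % 2) * u l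
          = ∑ j ∈ Finset.range m, 2^j := by
            refine Finset.sum_congr rfl fun j hj => ?_
            rw [hinner1 ⟨j, Finset.mem_range.mp hj⟩ l, mul_one]
        _ = 2^m - 1 := geom2 m
    · intro j hj
      obtain ⟨_, _, _, _, _, hdu, hdv, hz⟩ := h ⟨j, hj⟩
      rw [← Finset.sum_subset (hsub ⟨j, hj⟩) ?_]
      · rw [Finset.sum_pair (hune ⟨j, hj⟩)]
        simp only at hdu hdv
        rw [hdu, hdv]
      · intro u hu hnu
        have h1 : u ≠ uu ⟨j, hj⟩ := fun he => hnu (by rw [he]; exact Finset.mem_insert_self _ _)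
        have h2 : u ≠ vv ⟨j, hj⟩ := fun he => hnu (by rw [he]; simp)
        exact hz u (hsupp u hu) h1 h2
end

section
/- Let n ≥ 4 and n/2 ≤ d ≤ n-2. The number of polynomials f ∈ F_2[X_1,...,X_n] with deg f ≤ d (and squarefree monomials, i.e., deg_{X_j} f ≤ 1) whose Hamming weight is divisible by 4 equals 2^{binom(n,0)+...+binom(n,d)-1} + 2^{2^{n-1}-1}. -/
open MvPolynomial Finset

namespace RM

variable {n : ℕ}

/-- The squarefree exponent vector supported on `s`. -/
def msup (s : Finset (Fin n)) : Fin n →₀ ℕ :=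
  ⟨s, fun j => if j ∈ s then 1 else 0, by intro j; simp⟩

lemma msup_apply (s : Finset (Fin n)) (j : Fin n) : msup s j = if j ∈ s then 1 else 0 := rfl

lemma msup_support (s : Finset (Fin n)) : (msup s).support = s := rfl

lemma msup_inj : Function.Injective (msup (n := n)) := fun s t h => by
  rw [← msup_support s, h, msup_support]

lemma msup_sum (s : Finset (Fin n)) : (msup s).sum (fun _ e => e) = s.card := by
  rw [Finsupp.sum, msup_support]
  rw [Finset.card_eq_sum_ones]
  refine Finset.sum_congr rfl fun j hj => ?_
  rw [msup_apply, if_pos hj]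

lemma msup_sum' (s : Finset (Fin n)) : ((msup s).sum fun _ => id) = s.card :=
  msup_sum s

lemma msup_le_one (s : Finset (Fin n)) (i : Fin n) : msup s i ≤ 1 := by
  rw [msup_apply]; split <;> omega

lemma eq_msup_of {α : Fin n →₀ ℕ} (h : ∀ i, α i ≤ 1) : α = msup α.support := by
  ext j
  rw [msup_apply]
  by_cases hj : j ∈ α.support
  · rw [if_pos hj]
    have := Finsupp.mem_support_iff.mp hj
    have := h j
    omega
  · rw [if_neg hj]
    exact Finsupp.notMem_support_iff.mp hj

/-- The multilinear polynomial with coefficient function `c` on monomials of degree `≤ m`. -/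
noncomputable def polyOf (n m : ℕ) (c : {s : Finset (Fin n) // s.card ≤ m} → ZMod 2) :
    MvPolynomial (Fin n) (ZMod 2) :=
  ∑ s : {s : Finset (Fin n) // s.card ≤ m}, monomial (msup s.1) (c s)

lemma coeff_polyOf {m : ℕ} (c : {s : Finset (Fin n) // s.card ≤ m} → ZMod 2)
    (t : {s : Finset (Fin n) // s.card ≤ m}) : coeff (msup t.1) (polyOf n m c) = c t := by
  rw [polyOf, coeff_sum]
  rw [Finset.sum_eq_single t]
  · rw [coeff_monomial, if_pos rfl]
  · intro s _ hst
    rw [coeff_monomial, if_neg]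
    intro h
    exact hst (Subtype.ext (msup_inj h))
  · intro h; exact absurd (Finset.mem_univ t) h

lemma coeff_polyOf_ne {m : ℕ} (c : {s : Finset (Fin n) // s.card ≤ m} → ZMod 2)
    {α : Fin n →₀ ℕ} (hα : ∀ s : {s : Finset (Fin n) // s.card ≤ m}, msup s.1 ≠ α) :
    coeff α (polyOf n m c) = 0 := by
  rw [polyOf, coeff_sum]
  refine Finset.sum_eq_zero fun s _ => ?_
  rw [coeff_monomial, if_neg (hα s)]

lemma polyOf_injective (n m : ℕ) : Function.Injective (polyOf n m) := by
  intro c c' h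
  funext t
  rw [← coeff_polyOf c t, ← coeff_polyOf c' t, h]

lemma mem_support_le_one {f : MvPolynomial (Fin n) (ZMod 2)} (hf : ∀ j, f.degreeOf j ≤ 1)
    {α : Fin n →₀ ℕ} (hα : α ∈ f.support) (i : Fin n) : α i ≤ 1 :=
  degreeOf_le_iff.mp (hf i) α hα

lemma polyOf_coefOf {m : ℕ} {f : MvPolynomial (Fin n) (ZMod 2)} (hf1 : f.totalDegree ≤ m)
    (hf2 : ∀ j, f.degreeOf j ≤ 1) :
    polyOf n m (fun s => coeff (msup s.1) f) = f := by
  apply MvPolynomial.ext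
  intro α
  by_cases h1 : ∀ i, α i ≤ 1
  · by_cases h2 : α.support.card ≤ m
    · rw [eq_msup_of h1]
      exact coeff_polyOf _ ⟨α.support, h2⟩
    · rw [coeff_polyOf_ne]
      · by_contra h
        have hmem : α ∈ f.support := MvPolynomial.mem_support_iff.mpr fun h0 => h h0.symm
        have hsum : α.sum (fun _ e => e) ≤ m := le_trans (le_totalDegree hmem) hf1
        rw [eq_msup_of h1, msup_sum] at hsum
        exact h2 hsum
      · intro s hs
        apply h2
        have : α.support = s.1 := by rw [← hs, msup_support]
        rw [this]; exact s.2
  · push_neg at h1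
    obtain ⟨i, hi⟩ := h1
    rw [coeff_polyOf_ne]
    · symm
      by_contra h
      have hmem : α ∈ f.support := MvPolynomial.mem_support_iff.mpr fun h0 => h h0
      have := mem_support_le_one hf2 hmem i
      omega
    · intro s hs
      have := msup_le_one s.1 i
      rw [hs] at this
      omega

/-- The Reed–Muller code as a finset of polynomials. -/
noncomputable def CF (n m : ℕ) : Finset (MvPolynomial (Fin n) (ZMod 2)) :=
  Finset.image (polyOf n m) Finset.univ

lemma mem_CF {m : ℕ} {f : MvPolynomial (Fin n) (ZMod 2)} :
    f ∈ CF n m ↔ f.totalDegree ≤ m ∧ ∀ j, f.degreeOf j ≤ 1 := by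
  constructor
  · rw [CF, Finset.mem_image]
    rintro ⟨c, -, rfl⟩
    constructor
    · refine le_trans (totalDegree_finset_sum _ _) (Finset.sup_le fun s _ => ?_)
      refine le_trans (totalDegree_monomial_le _ _) ?_
      rw [msup_sum']; exact s.2
    · intro j
      rw [degreeOf_le_iff]
      intro β hβ
      have := MvPolynomial.support_sum hβ
      rw [Finset.mem_biUnion] at this
      obtain ⟨s, -, hβ2⟩ := this
      rw [MvPolynomial.support_monomial] at hβ2
      have := hβ2
      split at this
      · simp at this
      · rw [Finset.mem_singleton] at this
        rw [this]
        exact msup_le_one _ _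
  · rintro ⟨h1, h2⟩
    rw [CF, Finset.mem_image]
    exact ⟨_, Finset.mem_univ _, polyOf_coefOf h1 h2⟩

lemma card_CF (n m : ℕ) : (CF n m).card = 2 ^ (∑ j ∈ Finset.range (m + 1), n.choose j) := by
  rw [CF, Finset.card_image_of_injective _ (polyOf_injective n m), Finset.card_univ]
  rw [Fintype.card_fun, ZMod.card]
  congr 1
  rw [Fintype.card_subtype]
  have : Finset.univ.filter (fun s : Finset (Fin n) => s.card ≤ m) =
      (Finset.range (m + 1)).biUnion (fun j => Finset.powersetCard j Finset.univ) := by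
    ext t
    simp only [Finset.mem_filter, Finset.mem_univ, true_and, Finset.mem_biUnion,
      Finset.mem_range, Finset.mem_powersetCard]
    constructor
    · intro h; exact ⟨t.card, by omega, Finset.subset_univ t, rfl⟩
    · rintro ⟨j, hj, -, rfl⟩; omega
  rw [this, Finset.card_biUnion]
  · refine Finset.sum_congr rfl fun j _ => ?_
    rw [Finset.card_powersetCard, Finset.card_univ, Fintype.card_fin]
  · intro a _ b _ hab
    simp only [Finset.disjoint_left, Finset.mem_powersetCard]
    rintro t ⟨-, rfl⟩ ⟨-, h⟩
    exact hab h



/-- Hamming weight of (the evaluation of) a polynomial. -/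
noncomputable def wt (f : MvPolynomial (Fin n) (ZMod 2)) : ℕ :=
  (Finset.univ.filter fun x : Fin n → ZMod 2 => eval x f ≠ 0).card

lemma wt_eq_sum (f : MvPolynomial (Fin n) (ZMod 2)) :
    wt f = ∑ x : Fin n → ZMod 2, if eval x f ≠ 0 then 1 else 0 := by
  rw [wt, Finset.card_filter]

lemma cast_wt (f : MvPolynomial (Fin n) (ZMod 2)) :
    ((wt f : ZMod 2)) = ∑ x : Fin n → ZMod 2, eval x f := by
  rw [wt_eq_sum, Nat.cast_sum]
  refine Finset.sum_congr rfl fun x _ => ?_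
  have : ∀ a : ZMod 2, ((if a ≠ 0 then (1 : ℕ) else 0 : ℕ) : ZMod 2) = a := by decide
  exact this _

lemma zmod2_sum_pow (a : ℕ) : (∑ t : ZMod 2, t ^ a) = if a = 0 then 0 else 1 := by
  have huniv : (Finset.univ : Finset (ZMod 2)) = {0, 1} := by decide
  rw [huniv]
  rw [Finset.sum_insert (by decide), Finset.sum_singleton, one_pow]
  cases a with
  | zero => simp only [pow_zero, if_pos rfl]; decide
  | succ k => rw [zero_pow (Nat.succ_ne_zero k)]; simp

lemma sum_eval_eq_zero {f : MvPolynomial (Fin n) (ZMod 2)} (h : f.totalDegree < n) :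
    ∑ x : Fin n → ZMod 2, eval x f = 0 := by
  have : ∀ x : Fin n → ZMod 2, eval x f
      = ∑ α ∈ f.support, coeff α f * ∏ i, x i ^ α i := by
    intro x
    rw [eval_eq]
    refine Finset.sum_congr rfl fun α _ => ?_
    congr 1
    refine Finset.prod_subset (Finset.subset_univ _) fun i _ hi => ?_
    rw [Finsupp.notMem_support_iff.mp hi, pow_zero]
  simp only [this]
  rw [Finset.sum_comm]
  refine Finset.sum_eq_zero fun α hα => ?_
  rw [← Finset.mul_sum]
  have hiexists : ∃ i, α i = 0 := by
    by_contra hno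
    push_neg at hno
    have hsub : (Finset.univ : Finset (Fin n)) ⊆ α.support := fun i _ =>
      Finsupp.mem_support_iff.mpr (hno i)
    have h1 : n ≤ α.support.card := by
      have := Finset.card_le_card hsub
      simpa using this
    have h2 : α.support.card ≤ α.sum fun _ e => e := by
      rw [Finsupp.sum, Finset.card_eq_sum_ones]
      exact Finset.sum_le_sum fun i hi =>
        Nat.one_le_iff_ne_zero.mpr (Finsupp.mem_support_iff.mp hi)
    have h3 := le_totalDegree hα
    omega
  obtain ⟨i0, hi0⟩ := hiexists
  have : (∑ x : Fin n → ZMod 2, ∏ i, x i ^ α i) = ∏ i, ∑ t : ZMod 2, t ^ α i := by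
    rw [Fintype.prod_sum]
  rw [this, Finset.prod_eq_zero (Finset.mem_univ i0), mul_zero]
  rw [zmod2_sum_pow, if_pos hi0]

lemma even_wt {f : MvPolynomial (Fin n) (ZMod 2)} (h : f.totalDegree < n) : 2 ∣ wt f := by
  rw [← ZMod.natCast_eq_zero_iff, cast_wt, sum_eval_eq_zero h]

lemma wt_add (f g : MvPolynomial (Fin n) (ZMod 2)) :
    wt (f + g) + 2 * wt (f * g) = wt f + wt g := by
  simp only [wt_eq_sum, Finset.mul_sum, ← Finset.sum_add_distrib]
  refine Finset.sum_congr rfl fun x _ => ?_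
  rw [map_add, map_mul]
  generalize eval x f = a
  generalize eval x g = b
  revert a b; decide

lemma wt_zero : wt (0 : MvPolynomial (Fin n) (ZMod 2)) = 0 := by
  rw [wt]
  refine Finset.card_eq_zero.mpr ?_
  refine Finset.filter_eq_empty_iff.mpr fun x _ => ?_
  simp

lemma wt_monomial (α : Fin n →₀ ℕ) :
    wt (monomial α (1 : ZMod 2)) = 2 ^ (n - α.support.card) := by
  have hfil : (Finset.univ.filter fun x : Fin n → ZMod 2 => eval x (monomial α 1) ≠ 0) =
      Fintype.piFinset (fun i => if i ∈ α.support then ({1} : Finset (ZMod 2)) else univ) := by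
    ext x
    rw [Finset.mem_filter, Fintype.mem_piFinset]
    simp only [Finset.mem_univ, true_and, eval_monomial, one_mul]
    rw [Finsupp.prod]
    rw [Finset.prod_ne_zero_iff]
    constructor
    · intro h i
      split
      · next hi =>
        have := h i hi
        have hne : x i ≠ 0 := fun h0 => by
          rw [h0, zero_pow (Finsupp.mem_support_iff.mp hi)] at this
          exact this rfl
        have : x i = 1 := by revert hne; generalize x i = a; revert a; decide
        simp [this]
      · exact Finset.mem_univ _
    · intro h i hi
      have := h i
      rw [if_pos hi] at this
      rw [Finset.mem_singleton] at this
      rw [this, one_pow]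
      exact one_ne_zero
  rw [wt, hfil, Fintype.card_piFinset]
  have : ∀ i : Fin n, (if i ∈ α.support then ({1} : Finset (ZMod 2)) else univ).card =
      if i ∈ α.support then 1 else 2 := by
    intro i; split <;> simp [ZMod.card]
  simp only [this]
  rw [Finset.prod_ite, Finset.prod_const, Finset.prod_const, one_pow, one_mul]
  congr 1
  have hc : (Finset.univ.filter fun i : Fin n => i ∉ α.support) = α.supportᶜ := by
    ext i; simp [Finset.mem_compl]
  rw [hc, Finset.card_compl, Fintype.card_fin]

lemma four_dvd_wt_aux (N : ℕ) : ∀ f : MvPolynomial (Fin n) (ZMod 2), f.support.card ≤ N →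
    2 * f.totalDegree + 2 ≤ n → 4 ∣ wt f := by
  induction N with
  | zero =>
    intro f hcard _
    have : f.support = ∅ := Finset.card_eq_zero.mp (Nat.le_zero.mp hcard)
    rw [MvPolynomial.support_eq_empty.mp this, wt_zero]; exact dvd_zero 4
  | succ N ih =>
    intro f hcard hdeg
    by_cases h0 : f = 0
    · rw [h0, wt_zero]; exact dvd_zero 4
    obtain ⟨α, hα⟩ := MvPolynomial.support_nonempty.mpr h0
    have hc : coeff α f = 1 := by
      have := MvPolynomial.mem_support_iff.mp hα
      revert this; generalize coeff α f = a; revert a; decide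
    set g := f - monomial α 1 with hg
    have hsupp : g.support = f.support.erase α := by
      ext β
      simp only [MvPolynomial.mem_support_iff, Finset.mem_erase, hg,
        MvPolynomial.coeff_sub, coeff_monomial]
      by_cases hβ : α = β
      · subst hβ
        rw [if_pos rfl, hc]
        simp
      · rw [if_neg hβ, sub_zero]
        have : β ≠ α := fun h => hβ h.symm
        simp [this]
    have hcard' : g.support.card ≤ N := by
      rw [hsupp]
      have h1 : α ∈ f.support := hα
      have := Finset.card_erase_of_mem h1
      omega
    have hdeg' : g.totalDegree ≤ f.totalDegree := by
      rw [MvPolynomial.totalDegree, MvPolynomial.totalDegree]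
      refine Finset.sup_mono ?_
      rw [hsupp]
      exact Finset.erase_subset _ _
    have hfeq : monomial α 1 + g = f := by rw [hg]; ring
    have key := wt_add (monomial α 1) g
    rw [hfeq] at key
    -- bound on the support size of α
    have hsuppα : α.support.card ≤ f.totalDegree := by
      refine le_trans ?_ (le_totalDegree hα)
      rw [Finsupp.sum, Finset.card_eq_sum_ones]
      exact Finset.sum_le_sum fun i hi =>
        Nat.one_le_iff_ne_zero.mpr (Finsupp.mem_support_iff.mp hi)
    have d1 : 4 ∣ wt (monomial α (1 : ZMod 2)) := by
      rw [wt_monomial]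
      have h2 : 2 ≤ n - α.support.card := by omega
      calc (4 : ℕ) = 2 ^ 2 := by norm_num
      _ ∣ 2 ^ (n - α.support.card) := pow_dvd_pow 2 h2
    have d2 : 4 ∣ wt g := ih g hcard' (by omega)
    have d3 : 2 ∣ wt (monomial α 1 * g) := by
      refine even_wt (lt_of_le_of_lt (totalDegree_mul _ _) ?_)
      have := totalDegree_monomial_le α (1 : ZMod 2)
      have hms : ((α.sum fun _ => id)) = α.support.card + (α.sum fun _ => id) - α.support.card := by
        omega
      have hα2 : (monomial α (1 : ZMod 2)).totalDegree ≤ f.totalDegree := by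
        refine le_trans this ?_
        have : (α.sum fun _ => id) = (α.sum fun _ e => e) := rfl
        rw [this]
        exact le_totalDegree hα
      omega
    obtain ⟨a, ha⟩ := d1
    obtain ⟨b, hb⟩ := d2
    obtain ⟨c2, hc2⟩ := d3
    omega

lemma four_dvd_wt {f : MvPolynomial (Fin n) (ZMod 2)} (h : 2 * f.totalDegree + 2 ≤ n) :
    4 ∣ wt f :=
  four_dvd_wt_aux f.support.card f le_rfl h

local notation "GI" => GaussianInt

def ii : GaussianInt := ⟨0, 1⟩
def uu : GaussianInt := ⟨1, 1⟩
def vv : GaussianInt := ⟨1, -1⟩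

/-- The nontrivial character of `ZMod 2` with values in `ℤ[i]`. -/
def chi (a : ZMod 2) : GaussianInt := if a = 0 then 1 else -1

lemma chi_zero : chi 0 = 1 := rfl

lemma chi_add (a b : ZMod 2) : chi (a + b) = chi a * chi b := by
  revert a b; decide

lemma chi_add_one (a : ZMod 2) : chi (a + 1) = -chi a := by revert a; decide

lemma one_add_chi (a : ZMod 2) : 1 + chi a = if a = 0 then 2 else 0 := by
  revert a; decide

lemma two_ne_zero_GI : (2 : GI) ≠ 0 := by decide

lemma ii_sq : ii * ii = -1 := by decide

lemma ii_pow_four : ii ^ 4 = 1 := by decide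

lemma ii_pow_two : ii ^ 2 = -1 := by decide

lemma uu_mul_vv : uu * vv = 2 := by decide

lemma uu_mul_uu : uu * uu = 2 * ii := by decide

lemma vv_eq : vv = -ii * uu := by decide

lemma two_mul_ii_pow (a : ZMod 2) :
    2 * ii ^ (if a ≠ 0 then 1 else 0) = vv * chi a + uu := by
  revert a; decide

lemma ii_pow_of_four_dvd {m : ℕ} (h : 4 ∣ m) : ii ^ m = 1 := by
  obtain ⟨q, rfl⟩ := h
  rw [pow_mul, ii_pow_four, one_pow]

lemma neg_ii_pow_of_four_dvd {m : ℕ} (h : 4 ∣ m) : (-ii) ^ m = 1 := by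
  rw [neg_pow, ii_pow_of_four_dvd h, mul_one]
  obtain ⟨q, rfl⟩ := h
  rw [pow_mul]
  norm_num

lemma ii_pow_even {m : ℕ} (h2 : 2 ∣ m) : ii ^ m = if 4 ∣ m then 1 else -1 := by
  split
  · next h4 => exact ii_pow_of_four_dvd h4
  · next h4 =>
    obtain ⟨q, rfl⟩ := h2
    have hq : ¬ 2 ∣ q := fun ⟨r, hr⟩ => h4 ⟨r, by omega⟩
    obtain ⟨r, hr⟩ := Nat.odd_iff.mpr (Nat.two_dvd_ne_zero.mp hq)
    subst hr
    rw [show 2 * (2 * r + 1) = 4 * r + 2 by ring, pow_add, ii_pow_of_four_dvd ⟨r, rfl⟩,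
      one_mul, ii_pow_two]

lemma uu_pow_two_pow {n : ℕ} (hn : 3 ≤ n) : uu ^ (2 ^ n) = 2 ^ (2 ^ (n - 1)) := by
  have h1 : 2 ^ n = 2 ^ (n - 1) * 2 := by
    rw [← pow_succ]
    congr 1
    omega
  rw [h1, pow_mul']
  rw [show uu ^ 2 = 2 * ii by rw [pow_two]; exact uu_mul_uu]
  rw [mul_pow, ii_pow_of_four_dvd, mul_one]
  have : (4 : ℕ) = 2 ^ 2 := by norm_num
  rw [this]
  exact pow_dvd_pow 2 (by omega)

lemma prod_chi {β : Type*} [DecidableEq β] (S : Finset β) (g : β → ZMod 2) :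
    ∏ x ∈ S, chi (g x) = chi (∑ x ∈ S, g x) := by
  induction S using Finset.cons_induction with
  | empty => simp [chi_zero]
  | cons a s ha ih => rw [Finset.prod_cons, Finset.sum_cons, ih, chi_add]

lemma sum_chi_eq_zero {ι : Type*} [Fintype ι] [DecidableEq ι] (φ : (ι → ZMod 2) → ZMod 2)
    (hadd : ∀ a b, φ (a + b) = φ a + φ b) (hne : ¬ ∀ c, φ c = 0) :
    ∑ c : ι → ZMod 2, chi (φ c) = 0 := by
  push_neg at hne
  obtain ⟨c0, hc0⟩ := hne
  have hc1 : φ c0 = 1 := by revert hc0; generalize φ c0 = a; revert a; decide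
  have key : ∑ c : ι → ZMod 2, chi (φ c) = ∑ c : ι → ZMod 2, chi (φ (c + c0)) :=
    Fintype.sum_equiv (Equiv.addRight c0) _ _ (fun c => rfl) |>.symm
  have key2 : ∀ c : ι → ZMod 2, chi (φ (c + c0)) = - chi (φ c) := by
    intro c
    rw [hadd, hc1, chi_add_one]
  rw [Finset.sum_congr rfl (fun c _ => key2 c)] at key
  rw [Finset.sum_neg_distrib] at key
  have : (2 : GI) * ∑ c : ι → ZMod 2, chi (φ c) = 0 := by
    rw [two_mul]
    nth_rewrite 2 [key]
    ring
  rcases mul_eq_zero.mp this with h | h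
  · exact absurd h two_ne_zero_GI
  · exact h

section Main

variable (n : ℕ)

/-- The support of the evaluation of a polynomial, as a finset. -/
noncomputable def Psi (h : MvPolynomial (Fin n) (ZMod 2)) : Finset (Fin n → ZMod 2) :=
  Finset.univ.filter fun x => eval x h ≠ 0

lemma card_Psi (h : MvPolynomial (Fin n) (ZMod 2)) : (Psi n h).card = wt h := rfl

lemma sum_over_Psi (f h : MvPolynomial (Fin n) (ZMod 2)) :
    ∑ x ∈ Psi n h, eval x f = ∑ x : Fin n → ZMod 2, eval x (f * h) := by
  rw [Psi, Finset.sum_filter]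
  refine Finset.sum_congr rfl fun x _ => ?_
  rw [map_mul]
  generalize eval x f = a
  generalize eval x h = b
  revert a b; decide

lemma polyOf_add (m : ℕ) (c c' : {s : Finset (Fin n) // s.card ≤ m} → ZMod 2) :
    polyOf n m (c + c') = polyOf n m c + polyOf n m c' := by
  rw [polyOf, polyOf, polyOf, ← Finset.sum_add_distrib]
  refine Finset.sum_congr rfl fun s _ => ?_
  rw [Pi.add_apply, map_add]

lemma polyOf_zero (m : ℕ) : polyOf n m (0 : {s : Finset (Fin n) // s.card ≤ m} → ZMod 2) = 0 := by
  rw [polyOf]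
  refine Finset.sum_eq_zero fun s _ => ?_
  rw [Pi.zero_apply, map_zero]

/-- Multilinear polynomials are determined by their values. -/
lemma multilin_eval_zero {f : MvPolynomial (Fin n) (ZMod 2)} (hf : ∀ j, f.degreeOf j ≤ 1)
    (h : ∀ x : Fin n → ZMod 2, eval x f = 0) : f = 0 := by
  refine MvPolynomial.eq_zero_of_eval_eq_zero (Fin n) (ZMod 2) f h ?_
  rw [mem_restrictDegree]
  intro s hs i
  have : Fintype.card (ZMod 2) - 1 = 1 := by rw [ZMod.card]
  rw [this]
  exact degreeOf_le_iff.mp (hf i) s hs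

/-- The sets `S` orthogonal to all codewords of `CF n m`. -/
noncomputable def goodSets (m : ℕ) : Finset (Finset (Fin n → ZMod 2)) :=
  Finset.univ.filter fun S => ∀ f ∈ CF n m, ∑ x ∈ S, eval x f = 0

lemma mem_goodSets {m : ℕ} {S : Finset (Fin n → ZMod 2)} :
    S ∈ goodSets n m ↔ ∀ f ∈ CF n m, ∑ x ∈ S, eval x f = 0 := by
  rw [goodSets, Finset.mem_filter]
  simp only [Finset.mem_univ, true_and]

lemma sum_chi_CF (m : ℕ) (S : Finset (Fin n → ZMod 2)) :
    ∑ f ∈ CF n m, chi (∑ x ∈ S, eval x f) =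
      if S ∈ goodSets n m then ((CF n m).card : GI) else 0 := by
  split
  · next h =>
    rw [mem_goodSets] at h
    rw [Finset.sum_congr rfl (fun f hf => by rw [h f hf, chi_zero])]
    rw [Finset.sum_const, nsmul_eq_mul, mul_one]
  · next h =>
    rw [CF, Finset.sum_image (fun a _ b _ hab => polyOf_injective n m hab)]
    refine sum_chi_eq_zero (fun c => ∑ x ∈ S, eval x (polyOf n m c)) ?_ ?_
    · intro a b
      rw [← Finset.sum_add_distrib]
      refine Finset.sum_congr rfl fun x _ => ?_
      rw [polyOf_add, map_add]
    · intro hall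
      apply h
      rw [mem_goodSets]
      intro f hf
      rw [CF, Finset.mem_image] at hf
      obtain ⟨c, -, rfl⟩ := hf
      exact hall c

lemma card_fun_P : Fintype.card (Fin n → ZMod 2) = 2 ^ n := by
  rw [Fintype.card_fun, ZMod.card, Fintype.card_fin]

lemma sum_chi_over_sets (f : MvPolynomial (Fin n) (ZMod 2)) :
    ∑ S : Finset (Fin n → ZMod 2), chi (∑ x ∈ S, eval x f) =
      if (∀ x : Fin n → ZMod 2, eval x f = 0) then (2 : GI) ^ (2 ^ n) else 0 := by
  have h1 : ∀ S : Finset (Fin n → ZMod 2), chi (∑ x ∈ S, eval x f)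
      = (∏ x ∈ S, chi (eval x f)) * ∏ x ∈ Sᶜ, (1 : GI) := by
    intro S
    rw [prod_chi, Finset.prod_const_one, mul_one]
  rw [Finset.sum_congr rfl fun S _ => h1 S]
  rw [← Fintype.prod_add]
  split
  · next hz =>
    rw [Finset.prod_congr rfl fun x _ => by rw [hz x, chi_zero]]
    rw [Finset.prod_const, Finset.card_univ, card_fun_P]
    norm_num
  · next hz =>
    push_neg at hz
    obtain ⟨x0, hx0⟩ := hz
    refine Finset.prod_eq_zero (Finset.mem_univ x0) ?_
    rw [chi, if_neg hx0]
    ring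

lemma card_goodSets_mul (m : ℕ) :
    (CF n m).card * (goodSets n m).card = 2 ^ (2 ^ n) := by
  have hGI : ((CF n m).card : GI) * ((goodSets n m).card : GI) = (2 : GI) ^ (2 ^ n) := by
    have h1 : ∑ S : Finset (Fin n → ZMod 2), ∑ f ∈ CF n m, chi (∑ x ∈ S, eval x f)
        = ((CF n m).card : GI) * ((goodSets n m).card : GI) := by
      rw [Finset.sum_congr rfl (fun S _ => sum_chi_CF n m S)]
      rw [Finset.sum_ite_mem, Finset.univ_inter, Finset.sum_const, nsmul_eq_mul]
      ring
    have h2 : ∑ S : Finset (Fin n → ZMod 2), ∑ f ∈ CF n m, chi (∑ x ∈ S, eval x f)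
        = (2 : GI) ^ (2 ^ n) := by
      rw [Finset.sum_comm]
      rw [Finset.sum_congr rfl (fun f _ => sum_chi_over_sets n f)]
      rw [CF, Finset.sum_image (fun a _ b _ hab => polyOf_injective n m hab)]
      rw [Finset.sum_eq_single_of_mem 0 (Finset.mem_univ 0)]
      · rw [if_pos]
        intro x
        rw [polyOf_zero, map_zero]
      · intro c _ hc
        rw [if_neg]
        intro hall
        apply hc
        have hzero : polyOf n m c = 0 := by
          refine multilin_eval_zero n ?_ hall
          have : polyOf n m c ∈ CF n m := by
            rw [CF, Finset.mem_image]; exact ⟨c, Finset.mem_univ c, rfl⟩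
          exact (mem_CF.mp this).2
        rw [← polyOf_zero n m] at hzero
        exact polyOf_injective n m hzero
    rw [← h1, h2]
  have : (((CF n m).card * (goodSets n m).card : ℕ) : GI) = ((2 ^ (2 ^ n) : ℕ) : GI) := by
    push_cast
    rw [hGI]
  exact_mod_cast this

lemma choose_split {a b : ℕ} (h : a + b + 1 = n) :
    (∑ j ∈ Finset.range (a + 1), n.choose j) + (∑ j ∈ Finset.range (b + 1), n.choose j)
      = 2 ^ n := by
  have h2 : ∑ j ∈ Finset.range (b + 1), n.choose j
      = ∑ j ∈ Finset.range (b + 1), n.choose (a + 1 + j) := by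
    have hr := Finset.sum_range_reflect (fun j => n.choose (a + 1 + j)) (b + 1)
    rw [← hr]
    refine Finset.sum_congr rfl fun j hj => ?_
    rw [Finset.mem_range] at hj
    have h3 : a + 1 + (b + 1 - 1 - j) = n - j := by omega
    rw [h3, Nat.choose_symm (by omega)]
  rw [h2]
  have h4 : ∑ j ∈ Finset.range (b + 1), n.choose (a + 1 + j)
      = ∑ j ∈ Finset.Ico (a + 1) (n + 1), n.choose j := by
    rw [Finset.sum_Ico_eq_sum_range]
    have : n + 1 - (a + 1) = b + 1 := by omega
    rw [this]
  rw [h4, Finset.range_eq_Ico,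
    Finset.sum_Ico_consecutive _ (by omega : 0 ≤ a + 1) (by omega : a + 1 ≤ n + 1),
    ← Finset.range_eq_Ico, Nat.sum_range_choose]

lemma Psi_injOn {m : ℕ} : ∀ h ∈ CF n m, ∀ h' ∈ CF n m, Psi n h = Psi n h' → h = h' := by
  intro h hh h' hh' hps
  have heval : ∀ x : Fin n → ZMod 2, eval x h = eval x h' := by
    intro x
    have hx := Finset.ext_iff.mp hps x
    simp only [Psi, Finset.mem_filter, Finset.mem_univ, true_and] at hx
    revert hx
    generalize eval x h = a
    generalize eval x h' = b
    revert a b; decide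
  have hz : ∀ x : Fin n → ZMod 2, eval x (h - h') = 0 := fun x => by
    rw [map_sub, heval, sub_self]
  have hml : ∀ j, (h - h').degreeOf j ≤ 1 := by
    intro j
    rw [degreeOf_le_iff]
    intro s hs
    have := MvPolynomial.support_sub _ h h' hs
    rw [Finset.mem_union] at this
    rcases this with hs1 | hs1
    · exact degreeOf_le_iff.mp ((mem_CF.mp hh).2 j) s hs1
    · exact degreeOf_le_iff.mp ((mem_CF.mp hh').2 j) s hs1
  have := multilin_eval_zero n hml hz
  exact sub_eq_zero.mp this

lemma Psi_mem_goodSets {m m' : ℕ} (hmm' : m + m' < n) {h : MvPolynomial (Fin n) (ZMod 2)}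
    (hh : h ∈ CF n m') : Psi n h ∈ goodSets n m := by
  rw [mem_goodSets]
  intro f hf
  rw [sum_over_Psi]
  refine sum_eval_eq_zero (lt_of_le_of_lt (totalDegree_mul f h) ?_)
  have h1 := (mem_CF.mp hf).1
  have h2 := (mem_CF.mp hh).1
  omega

lemma goodSets_eq {d e : ℕ} (hde : d + e + 1 = n) :
    goodSets n d = (CF n e).image (Psi n) := by
  refine (Finset.eq_of_subset_of_card_le ?_ ?_).symm
  · intro S hS
    rw [Finset.mem_image] at hS
    obtain ⟨h, hh, rfl⟩ := hS
    exact Psi_mem_goodSets n (by omega) hh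
  · have himg : ((CF n e).image (Psi n)).card = 2 ^ (∑ j ∈ Finset.range (e + 1), n.choose j) := by
      rw [Finset.card_image_of_injOn fun a ha b hb hab => Psi_injOn n a ha b hb hab, card_CF]
    have hmul := card_goodSets_mul n d
    rw [card_CF] at hmul
    have hsplit := choose_split (n := n) hde
    have h2n : (2:ℕ) ^ (2 ^ n) = 2 ^ (∑ j ∈ Finset.range (d + 1), n.choose j) *
        2 ^ (∑ j ∈ Finset.range (e + 1), n.choose j) := by
      rw [← pow_add, hsplit]
    rw [h2n] at hmul
    have hpos : 0 < (2:ℕ) ^ (∑ j ∈ Finset.range (d + 1), n.choose j) := Nat.pow_pos (by norm_num)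
    have := Nat.eq_of_mul_eq_mul_left hpos hmul
    rw [himg, this]

lemma step_f (f : MvPolynomial (Fin n) (ZMod 2)) :
    (2 : GI) ^ (2 ^ n) * ii ^ wt f
      = ∑ S : Finset (Fin n → ZMod 2),
          (vv ^ S.card * uu ^ (2 ^ n - S.card)) * chi (∑ x ∈ S, eval x f) := by
  have h1 : (2 : GI) ^ (2 ^ n) * ii ^ wt f
      = ∏ x : Fin n → ZMod 2, (2 * ii ^ (if eval x f ≠ 0 then 1 else 0)) := by
    rw [Finset.prod_mul_distrib, Finset.prod_const, Finset.prod_pow_eq_pow_sum, ← wt_eq_sum,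
      Finset.card_univ, card_fun_P]
  rw [h1]
  rw [Finset.prod_congr rfl fun x _ => two_mul_ii_pow (eval x f)]
  rw [Fintype.prod_add]
  refine Finset.sum_congr rfl fun S _ => ?_
  rw [Finset.prod_mul_distrib, Finset.prod_const, Finset.prod_const, prod_chi,
    Finset.card_compl, card_fun_P]
  ring

lemma T_eq (d : ℕ) (hn : 4 ≤ n) (hd1 : n ≤ 2 * d) (hd2 : d + 2 ≤ n) :
    ∑ f ∈ CF n d, ii ^ wt f = (2 : GI) ^ (2 ^ (n - 1)) := by
  set e := n - d - 1 with he
  have hde : d + e + 1 = n := by omega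
  have hmain : (2 : GI) ^ (2 ^ n) * (∑ f ∈ CF n d, ii ^ wt f)
      = (2 : GI) ^ (2 ^ n) * (2 : GI) ^ (2 ^ (n - 1)) := by
    rw [Finset.mul_sum]
    rw [Finset.sum_congr rfl fun f _ => step_f n f]
    rw [Finset.sum_comm]
    rw [Finset.sum_congr rfl fun S _ => by rw [← Finset.mul_sum, sum_chi_CF n d S]]
    rw [Finset.sum_congr rfl fun S _ => by rw [mul_ite, mul_zero]]
    rw [Finset.sum_ite_mem, Finset.univ_inter]
    rw [goodSets_eq n hde]
    rw [Finset.sum_image fun a ha b hb hab => Psi_injOn n a ha b hb hab]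
    have hterm : ∀ h ∈ CF n e, (vv ^ (Psi n h).card * uu ^ (2 ^ n - (Psi n h).card))
        * ((CF n d).card : GI) = (2 : GI) ^ (2 ^ (n - 1)) * ((CF n d).card : GI) := by
      intro h hh
      rw [card_Psi]
      have h4 : 4 ∣ wt h := by
        refine four_dvd_wt ?_
        have := (mem_CF.mp hh).1
        omega
      have hle : wt h ≤ 2 ^ n := by
        rw [wt]
        calc (Finset.univ.filter fun x : Fin n → ZMod 2 => eval x h ≠ 0).card
            ≤ Finset.univ.card := Finset.card_filter_le _ _
        _ = 2 ^ n := by rw [Finset.card_univ, card_fun_P]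
      have hvv : vv ^ wt h = uu ^ wt h := by
        rw [vv_eq, mul_pow, neg_ii_pow_of_four_dvd h4, one_mul]
      rw [hvv, ← pow_add]
      have : wt h + (2 ^ n - wt h) = 2 ^ n := by omega
      rw [this, uu_pow_two_pow (by omega)]
    rw [Finset.sum_congr rfl hterm]
    rw [Finset.sum_const, nsmul_eq_mul, card_CF, card_CF]
    have h2n : (2 : GI) ^ (2 ^ n) = 2 ^ (∑ j ∈ Finset.range (d + 1), n.choose j) *
        2 ^ (∑ j ∈ Finset.range (e + 1), n.choose j) := by
      rw [← pow_add, choose_split (n := n) hde]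
    push_cast
    rw [h2n]
    ring
  exact mul_left_cancel₀ (pow_ne_zero _ two_ne_zero_GI) hmain

end Main

end RM

/-- Corollary 3.9: for `n ≥ 4` and `n/2 ≤ d ≤ n - 2`, the number of codewords of the binary
Reed–Muller code `R_2(d, n)` with weight divisible by `4` is
`2^(binom(n,0)+⋯+binom(n,d)-1) + 2^(2^(n-1)-1)`. -/
theorem stmt12 (n d : ℕ) (hn : 4 ≤ n) (hd1 : n ≤ 2 * d) (hd2 : d ≤ n - 2) :
    Nat.card {f : MvPolynomial (Fin n) (ZMod 2) //
        f.totalDegree ≤ d ∧ (∀ j, f.degreeOf j ≤ 1) ∧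
        4 ∣ Nat.card {x : Fin n → ZMod 2 // eval x f ≠ 0}} =
      2 ^ (∑ j ∈ Finset.range (d + 1), n.choose j - 1) + 2 ^ (2 ^ (n - 1) - 1) := by
  have hd2' : d + 2 ≤ n := by omega
  have hwt : ∀ f : MvPolynomial (Fin n) (ZMod 2),
      Nat.card {x : Fin n → ZMod 2 // eval x f ≠ 0} = RM.wt f := by
    intro f
    rw [Nat.card_eq_fintype_card, Fintype.card_subtype]
    rfl
  have hpred : ∀ f : MvPolynomial (Fin n) (ZMod 2),
      (f.totalDegree ≤ d ∧ (∀ j, f.degreeOf j ≤ 1) ∧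
          4 ∣ Nat.card {x : Fin n → ZMod 2 // eval x f ≠ 0})
        ↔ f ∈ (RM.CF n d).filter (fun f => 4 ∣ RM.wt f) := by
    intro f
    rw [Finset.mem_filter, RM.mem_CF, hwt f]
    tauto
  rw [Nat.card_congr (Equiv.subtypeEquivRight hpred), Nat.card_eq_finsetCard]
  set k := ∑ j ∈ Finset.range (d + 1), n.choose j with hk
  set N := ((RM.CF n d).filter (fun f => 4 ∣ RM.wt f)).card with hN
  set M := ((RM.CF n d).filter (fun f => ¬ 4 ∣ RM.wt f)).card with hM
  have hNM : N + M = 2 ^ k := by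
    rw [hN, hM, Finset.card_filter_add_card_filter_not, RM.card_CF]
  have hT := RM.T_eq (n := n) d hn hd1 hd2'
  have hsum : ∑ f ∈ RM.CF n d, RM.ii ^ RM.wt f
      = ∑ f ∈ RM.CF n d, (if 4 ∣ RM.wt f then (1 : GaussianInt) else -1) := by
    refine Finset.sum_congr rfl fun f hf => ?_
    refine RM.ii_pow_even (RM.even_wt ?_)
    have := (RM.mem_CF.mp hf).1
    omega
  rw [hsum, Finset.sum_ite, Finset.sum_const, Finset.sum_const, nsmul_eq_mul, nsmul_eq_mul,
    ← hN, ← hM] at hT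
  have hcast : ((N : ℕ) : GaussianInt) = ((2 ^ (2 ^ (n - 1)) + M : ℕ) : GaussianInt) := by
    push_cast
    linear_combination hT
  have hNat : N = 2 ^ (2 ^ (n - 1)) + M := Nat.cast_injective hcast
  have hk1 : 1 ≤ k := by
    rw [hk]
    calc 1 = n.choose 0 := (Nat.choose_zero_right n).symm
    _ ≤ ∑ j ∈ Finset.range (d + 1), n.choose j :=
        Finset.single_le_sum (fun j _ => Nat.zero_le _) (Finset.mem_range.mpr (by omega))
  have ht1 : 1 ≤ 2 ^ (n - 1) := Nat.one_le_two_pow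
  have e1 : 2 ^ k = 2 * 2 ^ (k - 1) := by
    rw [← pow_succ']
    congr 1
    omega
  have e2 : 2 ^ (2 ^ (n - 1)) = 2 * 2 ^ (2 ^ (n - 1) - 1) := by
    rw [← pow_succ']
    congr 1
    omega
  omega
end

section
/- Let q = 2, n ≥ 4, n/2 ≤ d ≤ n-2, and f = Σ_{u ∈ U_d ∩ {0,1}^n} a_u X^u a multilinear polynomial over F_2 of degree ≤ d. Then |Z(f)| ≡ 0 (mod 4) if and only if Σ_{{u,v}} a_u a_v = 0 in F_2, where the sum runs over unordered pairs {u,v} with u, v ∈ {0,1}^n, |u|, |v| ∈ [n-d, d], and u + v ≥ (1,...,1) componentwise. -/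
open MvPolynomial Finset

/-- Lift `ZMod 2` into `ZMod 4` via `val`. -/
def lft (a : ZMod 2) : ZMod 4 := (a.val : ZMod 4)

@[simp] lemma lft_zero : lft 0 = 0 := rfl
@[simp] lemma lft_one : lft 1 = 1 := rfl

lemma lft_mul : ∀ a b : ZMod 2, lft (a * b) = lft a * lft b := by decide

lemma lft_add : ∀ a b : ZMod 2, lft (a + b) = lft a + lft b - 2 * (lft a * lft b) := by
  decide

lemma lft_pow (a : ZMod 2) (k : ℕ) : lft (a ^ k) = lft a ^ k := by
  induction k with
  | zero => rfl
  | succ k ih => rw [pow_succ, pow_succ, lft_mul, ih]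

lemma two_lft_sum {ι : Type*} (s : Finset ι) (t : ι → ZMod 2) :
    2 * lft (∑ i ∈ s, t i) = 2 * ∑ i ∈ s, lft (t i) := by
  classical
  induction s using Finset.induction_on with
  | empty => simp
  | insert a s h ih =>
    rw [Finset.sum_insert h, Finset.sum_insert h, lft_add, mul_sub, mul_add, mul_add, ih]
    ring_nf
    rw [show (4 : ZMod 4) = 0 by decide]
    ring

lemma lft_sum {ι : Type*} [DecidableEq ι] (s : Finset ι) (t : ι → ZMod 2) :
    lft (∑ i ∈ s, t i) =
      ∑ i ∈ s, lft (t i) - ∑ p ∈ s.offDiag, lft (t p.1) * lft (t p.2) := by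
  induction s using Finset.induction_on with
  | empty => simp
  | insert a s h ih =>
    have h2 : 2 * (lft (t a) * lft (∑ i ∈ s, t i)) =
        ∑ i ∈ s, lft (t a) * lft (t i) + ∑ i ∈ s, lft (t i) * lft (t a) := by
      calc 2 * (lft (t a) * lft (∑ i ∈ s, t i))
          = lft (t a) * (2 * lft (∑ i ∈ s, t i)) := by ring
        _ = lft (t a) * (2 * ∑ i ∈ s, lft (t i)) := by rw [two_lft_sum]
        _ = ∑ i ∈ s, (lft (t a) * lft (t i) + lft (t i) * lft (t a)) := by
            rw [Finset.mul_sum, Finset.mul_sum]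
            exact Finset.sum_congr rfl fun i _ => by ring
        _ = _ := Finset.sum_add_distrib
    have hs1 : ∑ p ∈ ({a} ×ˢ s : Finset (ι × ι)), lft (t p.1) * lft (t p.2) =
        ∑ i ∈ s, lft (t a) * lft (t i) := by
      rw [Finset.singleton_product, Finset.sum_map]; rfl
    have hs2 : ∑ p ∈ (s ×ˢ {a} : Finset (ι × ι)), lft (t p.1) * lft (t p.2) =
        ∑ i ∈ s, lft (t i) * lft (t a) := by
      rw [Finset.product_singleton, Finset.sum_map]; rfl
    have hd1 : Disjoint ({a} ×ˢ s : Finset (ι × ι)) (s ×ˢ {a}) := by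
      rw [Finset.disjoint_left]
      rintro ⟨x, y⟩ hxy hxy'
      simp only [Finset.mem_product, Finset.mem_singleton] at hxy hxy'
      exact h (hxy.1 ▸ hxy'.1)
    have hd2 : Disjoint s.offDiag (({a} ×ˢ s : Finset (ι × ι)) ∪ s ×ˢ {a}) := by
      rw [Finset.disjoint_left]
      rintro ⟨x, y⟩ hxy hxy'
      rw [Finset.mem_offDiag] at hxy
      simp only [Finset.mem_union, Finset.mem_product, Finset.mem_singleton] at hxy'
      rcases hxy' with ⟨rfl, _⟩ | ⟨_, rfl⟩
      exacts [h hxy.1, h hxy.2.1]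
    have hdA : Disjoint (s.offDiag ∪ ({a} ×ˢ s : Finset (ι × ι))) (s ×ˢ {a}) :=
      Finset.disjoint_union_left.mpr ⟨(Finset.disjoint_union_right.mp hd2).2, hd1⟩
    have hdB : Disjoint s.offDiag (({a} ×ˢ s : Finset (ι × ι))) :=
      (Finset.disjoint_union_right.mp hd2).1
    rw [Finset.sum_insert h, lft_add, h2, ih, Finset.sum_insert h,
      Finset.offDiag_insert h, Finset.sum_union hdA, Finset.sum_union hdB, hs1, hs2]
    ring

/-- `lft` as a monoid hom. -/
def lftHom : ZMod 2 →* ZMod 4 where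
  toFun := lft
  map_one' := rfl
  map_mul' := lft_mul

lemma sum_lft_pow (k : ℕ) : (∑ a : ZMod 2, lft a ^ k) = if k = 0 then 2 else 1 := by
  cases k with
  | zero => decide
  | succ k =>
    rw [show (Finset.univ : Finset (ZMod 2)) = {0, 1} by decide]
    rw [Finset.sum_insert (by decide), Finset.sum_singleton]
    simp [zero_pow, lft_zero, lft_one]

lemma sum_prod_lft {n : ℕ} (g : Fin n → ℕ) :
    ∑ x : Fin n → ZMod 2, ∏ j, lft (x j) ^ g j =
      2 ^ (Finset.univ.filter (fun j => g j = 0)).card := by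
  classical
  have := Finset.prod_univ_sum (fun _ : Fin n => (Finset.univ : Finset (ZMod 2)))
    (fun j a => lft a ^ g j)
  rw [Fintype.piFinset_univ] at this
  rw [← this]
  have : ∀ j : Fin n, (∑ a : ZMod 2, lft a ^ g j) = if g j = 0 then 2 else 1 := fun j =>
    sum_lft_pow (g j)
  rw [Finset.prod_congr rfl fun j _ => this j, Finset.prod_ite, Finset.prod_const,
    Finset.prod_const_one, mul_one]

lemma two_pow_zmod4 {k : ℕ} (hk : 2 ≤ k) : (2 : ZMod 4) ^ k = 0 := by
  obtain ⟨m, rfl⟩ := Nat.exists_eq_add_of_le hk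
  rw [pow_add, show (2 : ZMod 4) ^ 2 = 0 by decide, zero_mul]

/-- binary code of a finset -/
def keyS {n : ℕ} (S : Finset (Fin n)) : ℕ := ∑ j ∈ S, 2 ^ (j : ℕ)

lemma keyS_injective {n : ℕ} : Function.Injective (keyS (n := n)) := by
  intro S T h
  have hS : ∀ U : Finset (Fin n), ∑ k ∈ U.image (Fin.val), 2 ^ k = keyS U := fun U =>
    Finset.sum_image (fun a _ b _ hab => Fin.val_injective hab)
  have h2 : (fun s : Finset ℕ => ∑ i ∈ s, 2 ^ i) (S.image Fin.val)
      = (fun s : Finset ℕ => ∑ i ∈ s, 2 ^ i) (T.image Fin.val) := by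
    simp only [hS, h]
  exact Finset.image_injective Fin.val_injective
    (Finset.geomSum_injective le_rfl h2)

/-- the multilinear monomial with support `S` -/
noncomputable def mOf {n : ℕ} (S : Finset (Fin n)) : Fin n →₀ ℕ := ∑ j ∈ S, Finsupp.single j 1

lemma mOf_apply {n : ℕ} (S : Finset (Fin n)) (j : Fin n) :
    mOf S j = if j ∈ S then 1 else 0 := by
  classical
  rw [mOf, Finsupp.finset_sum_apply]
  simp only [Finsupp.single_apply]
  exact Finset.sum_ite_eq' S j (fun _ => 1)

lemma mOf_support {n : ℕ} (S : Finset (Fin n)) : (mOf S).support = S := by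
  ext j
  rw [Finsupp.mem_support_iff, mOf_apply]
  by_cases hj : j ∈ S <;> simp [hj]

lemma mOf_degree {n : ℕ} (S : Finset (Fin n)) : ((mOf S).sum fun _ e => e) = S.card := by
  rw [Finsupp.sum, mOf_support, Finset.card_eq_sum_ones]
  exact Finset.sum_congr rfl fun j hj => by rw [mOf_apply, if_pos hj]

lemma eq_mOf_support {n : ℕ} {f : MvPolynomial (Fin n) (ZMod 2)} (hml : ∀ j, f.degreeOf j ≤ 1)
    {m : Fin n →₀ ℕ} (hm : m ∈ f.support) : mOf m.support = m := by
  have h1 : ∀ j, m j ≤ 1 := fun j =>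
    le_trans (MvPolynomial.monomial_le_degreeOf j hm) (hml j)
  ext j
  rw [mOf_apply]
  by_cases hj : j ∈ m.support
  · have h0 := Finsupp.mem_support_iff.mp hj
    have := h1 j
    rw [if_pos hj]
    omega
  · rw [if_neg hj]
    exact (Finsupp.notMem_support_iff.mp hj).symm

lemma card_support_le {n : ℕ} {f : MvPolynomial (Fin n) (ZMod 2)} {m : Fin n →₀ ℕ}
    (hm : m ∈ f.support) : m.support.card ≤ f.totalDegree := by
  refine le_trans ?_ (MvPolynomial.le_totalDegree hm)
  rw [Finsupp.sum, Finset.card_eq_sum_ones]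
  exact Finset.sum_le_sum fun j hj =>
    Nat.one_le_iff_ne_zero.mpr (Finsupp.mem_support_iff.mp hj)

lemma sum_x_term {n : ℕ} (c : ZMod 2) (g : Fin n → ℕ) :
    ∑ x : Fin n → ZMod 2, lft (c * ∏ j, x j ^ g j) =
      lft c * 2 ^ (Finset.univ.filter (fun j => g j = 0)).card := by
  have h : ∀ x : Fin n → ZMod 2, lft (c * ∏ j, x j ^ g j) =
      lft c * ∏ j, lft (x j) ^ g j := by
    intro x
    rw [lft_mul]
    congr 1
    rw [show lft (∏ j, x j ^ g j) = lftHom (∏ j, x j ^ g j) from rfl, map_prod]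
    exact Finset.prod_congr rfl fun j _ => lft_pow (x j) (g j)
  rw [Finset.sum_congr rfl fun x _ => h x, ← Finset.mul_sum, sum_prod_lft]

lemma sum_x_term2 {n : ℕ} (c c' : ZMod 2) (g g' : Fin n → ℕ) :
    ∑ x : Fin n → ZMod 2, lft (c * ∏ j, x j ^ g j) * lft (c' * ∏ j, x j ^ g' j) =
      lft c * lft c' * 2 ^ (Finset.univ.filter (fun j => g j + g' j = 0)).card := by
  have h : ∀ x : Fin n → ZMod 2, lft (c * ∏ j, x j ^ g j) * lft (c' * ∏ j, x j ^ g' j) =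
      lft c * lft c' * ∏ j, lft (x j) ^ (g j + g' j) := by
    intro x
    rw [lft_mul, lft_mul]
    have e1 : lft (∏ j, x j ^ g j) = ∏ j, lft (x j) ^ g j := by
      rw [show lft (∏ j, x j ^ g j) = lftHom (∏ j, x j ^ g j) from rfl, map_prod]
      exact Finset.prod_congr rfl fun j _ => lft_pow (x j) (g j)
    have e2 : lft (∏ j, x j ^ g' j) = ∏ j, lft (x j) ^ g' j := by
      rw [show lft (∏ j, x j ^ g' j) = lftHom (∏ j, x j ^ g' j) from rfl, map_prod]
      exact Finset.prod_congr rfl fun j _ => lft_pow (x j) (g' j)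
    rw [e1, e2, mul_mul_mul_comm, ← Finset.prod_mul_distrib]
    exact congrArg _ (Finset.prod_congr rfl fun j _ => (pow_add (lft (x j)) (g j) (g' j)).symm)
  rw [Finset.sum_congr rfl fun x _ => h x, ← Finset.mul_sum, sum_prod_lft]

lemma cover_iff {n : ℕ} (m m' : Fin n →₀ ℕ) :
    m.support ∪ m'.support = Finset.univ ↔
      (Finset.univ.filter fun j => m j + m' j = 0) = ∅ := by
  rw [Finset.filter_eq_empty_iff, Finset.eq_univ_iff_forall]
  apply forall_congr'
  intro j
  simp only [Finset.mem_univ, true_implies, Finset.mem_union, Finsupp.mem_support_iff,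
    Nat.add_eq_zero]
  tauto

lemma key_eval {n d : ℕ} (hn : 4 ≤ n) (hd2 : d ≤ n - 2)
    (f : MvPolynomial (Fin n) (ZMod 2)) (hdeg : f.totalDegree ≤ d)
    (hml : ∀ j, f.degreeOf j ≤ 1) :
    ∑ x : Fin n → ZMod 2, lft (eval x f) =
      -(2 * ∑ p ∈ (f.support.offDiag.filter
            (fun p => keyS p.1.support < keyS p.2.support)).filter
            (fun p => p.1.support ∪ p.2.support = Finset.univ),
          lft (coeff p.1 f) * lft (coeff p.2 f)) := by
  classical
  set F : (Fin n →₀ ℕ) × (Fin n →₀ ℕ) → ZMod 4 := fun p =>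
    lft (coeff p.1 f) * lft (coeff p.2 f) *
      2 ^ (Finset.univ.filter fun j => p.1 j + p.2 j = 0).card with hF
  have step1 : ∑ x : Fin n → ZMod 2, lft (eval x f) = -(∑ p ∈ f.support.offDiag, F p) := by
    have heval : ∀ x : Fin n → ZMod 2, lft (eval x f) =
        ∑ m ∈ f.support, lft (coeff m f * ∏ j, x j ^ m j)
          - ∑ p ∈ f.support.offDiag,
              lft (coeff p.1 f * ∏ j, x j ^ p.1 j) * lft (coeff p.2 f * ∏ j, x j ^ p.2 j) := by
      intro x
      rw [eval_eq' x f, lft_sum]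
    rw [Finset.sum_congr rfl fun x _ => heval x, Finset.sum_sub_distrib,
      Finset.sum_comm, Finset.sum_comm (s := Finset.univ)]
    have hzero : ∑ m ∈ f.support, ∑ x : Fin n → ZMod 2,
        lft (coeff m f * ∏ j, x j ^ m j) = 0 := by
      refine Finset.sum_eq_zero fun m hm => ?_
      rw [sum_x_term]
      have hfe : (Finset.univ.filter fun j => m j = 0) = Finset.univ \ m.support := by
        ext j
        simp [Finsupp.notMem_support_iff]
      have hcard : m.support.card ≤ d := le_trans (card_support_le hm) hdeg
      have hk : 2 ≤ (Finset.univ.filter fun j => m j = 0).card := by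
        rw [hfe, Finset.card_sdiff_of_subset (Finset.subset_univ _), Finset.card_univ, Fintype.card_fin]
        omega
      rw [two_pow_zmod4 hk, mul_zero]
    rw [hzero, zero_sub]
    congr 1
    exact Finset.sum_congr rfl fun p _ => sum_x_term2 _ _ _ _
  rw [step1]
  congr 1
  have hkeys : ∀ p ∈ f.support.offDiag, keyS p.1.support ≠ keyS p.2.support := by
    rintro ⟨m, m'⟩ hp hkey
    rw [Finset.mem_offDiag] at hp
    have hsupp := keyS_injective hkey
    exact hp.2.2 (by
      rw [← eq_mOf_support hml hp.1, ← eq_mOf_support hml hp.2.1, hsupp])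
  have hFsymm : ∀ p : (Fin n →₀ ℕ) × (Fin n →₀ ℕ), F p.swap = F p := by
    rintro ⟨m, m'⟩
    simp only [hF, Prod.swap]
    rw [Finset.filter_congr (fun j _ => by rw [Nat.add_comm (m' j) (m j)])]
    ring
  have hswap : ∑ p ∈ f.support.offDiag.filter
        (fun p => ¬ keyS p.1.support < keyS p.2.support), F p
      = ∑ p ∈ f.support.offDiag.filter
        (fun p => keyS p.1.support < keyS p.2.support), F p := by
    refine Finset.sum_nbij' Prod.swap Prod.swap ?_ ?_ ?_ ?_ ?_
    · rintro ⟨m, m'⟩ hp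
      rw [Finset.mem_filter] at hp
      rw [Finset.mem_offDiag] at hp
      obtain ⟨⟨h1, h2, h3⟩, h4⟩ := hp
      rw [Prod.swap_prod_mk, Finset.mem_filter, Finset.mem_offDiag]
      dsimp only at h4 ⊢
      refine ⟨⟨h2, h1, Ne.symm h3⟩, ?_⟩
      have hne := hkeys (m, m') (Finset.mem_offDiag.mpr ⟨h1, h2, h3⟩)
      dsimp only at hne
      omega
    · rintro ⟨m, m'⟩ hp
      rw [Finset.mem_filter] at hp
      rw [Finset.mem_offDiag] at hp
      obtain ⟨⟨h1, h2, h3⟩, h4⟩ := hp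
      rw [Prod.swap_prod_mk, Finset.mem_filter, Finset.mem_offDiag]
      dsimp only at h4 ⊢
      exact ⟨⟨h2, h1, Ne.symm h3⟩, by omega⟩
    · intro p _; exact Prod.swap_swap p
    · intro p _; exact Prod.swap_swap p
    · intro p _; exact (hFsymm p).symm
  have hsplit : ∑ p ∈ f.support.offDiag, F p
      = 2 * ∑ p ∈ f.support.offDiag.filter
          (fun p => keyS p.1.support < keyS p.2.support), F p := by
    rw [← Finset.sum_filter_add_sum_filter_not f.support.offDiag
      (fun p => keyS p.1.support < keyS p.2.support) F, hswap, two_mul]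
  rw [hsplit, Finset.mul_sum, Finset.mul_sum]
  rw [← Finset.sum_filter_of_ne (p := fun p : (Fin n →₀ ℕ) × (Fin n →₀ ℕ) =>
      p.1.support ∪ p.2.support = Finset.univ)
      (f := fun p => 2 * F p) ?_]
  · refine Finset.sum_congr rfl fun p hp => ?_
    rw [Finset.mem_filter] at hp
    have h0 : (Finset.univ.filter fun j => p.1 j + p.2 j = 0) = ∅ :=
      (cover_iff p.1 p.2).mp hp.2
    simp only [hF, h0, Finset.card_empty, pow_zero, mul_one]
  · intro p _ hne
    by_contra hcov
    apply hne
    have h1 : (Finset.univ.filter fun j => p.1 j + p.2 j = 0) ≠ ∅ := fun h =>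
      hcov ((cover_iff p.1 p.2).mpr h)
    have h2 : 1 ≤ (Finset.univ.filter fun j => p.1 j + p.2 j = 0).card :=
      Nat.one_le_iff_ne_zero.mpr (fun h => h1 (Finset.card_eq_zero.mp h))
    simp only [hF]
    rw [show (2 : ZMod 4) * (lft (coeff p.1 f) * lft (coeff p.2 f) * 2 ^ _) =
      lft (coeff p.1 f) * lft (coeff p.2 f) * 2 ^ ((Finset.univ.filter
        fun j => p.1 j + p.2 j = 0).card + 1) by rw [pow_succ]; ring]
    rw [two_pow_zmod4 (by omega), mul_zero]

lemma reindex {n d : ℕ} (f : MvPolynomial (Fin n) (ZMod 2)) (hdeg : f.totalDegree ≤ d)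
    (hml : ∀ j, f.degreeOf j ≤ 1) :
    ∑ p ∈ (f.support.offDiag.filter
        (fun p => keyS p.1.support < keyS p.2.support)).filter
        (fun p => p.1.support ∪ p.2.support = Finset.univ),
      coeff p.1 f * coeff p.2 f
    = ∑ ST ∈ Finset.univ.filter (fun ST : Finset (Fin n) × Finset (Fin n) =>
          ST.1 ∪ ST.2 = Finset.univ ∧
          n - d ≤ ST.1.card ∧ ST.1.card ≤ d ∧ n - d ≤ ST.2.card ∧ ST.2.card ≤ d ∧
          (∑ j ∈ ST.1, 2 ^ (j : ℕ)) < ∑ j ∈ ST.2, 2 ^ (j : ℕ)),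
        coeff (∑ j ∈ ST.1, Finsupp.single j 1) f *
          coeff (∑ j ∈ ST.2, Finsupp.single j 1) f := by
  classical
  rw [← Finset.sum_filter_of_ne (p := fun ST : Finset (Fin n) × Finset (Fin n) =>
      coeff (mOf ST.1) f ≠ 0 ∧ coeff (mOf ST.2) f ≠ 0)
      (fun ST _ hne => by
        constructor
        · intro h0
          exact hne (by rw [show (∑ j ∈ ST.1, Finsupp.single j 1 : Fin n →₀ ℕ) = mOf ST.1
            from rfl, h0, zero_mul])
        · intro h0
          exact hne (by rw [show (∑ j ∈ ST.2, Finsupp.single j 1 : Fin n →₀ ℕ) = mOf ST.2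
            from rfl, h0, mul_zero]))]
  refine Finset.sum_nbij' (fun p => (p.1.support, p.2.support))
    (fun ST => (mOf ST.1, mOf ST.2)) ?_ ?_ ?_ ?_ ?_
  · rintro ⟨m, m'⟩ hp
    rw [Finset.mem_filter] at hp
    obtain ⟨hp1, hcov⟩ := hp
    rw [Finset.mem_filter, Finset.mem_offDiag] at hp1
    obtain ⟨⟨hm, hm', hne⟩, hkey⟩ := hp1
    dsimp only at hcov hkey ⊢
    have hc1 : m.support.card ≤ d := le_trans (card_support_le hm) hdeg
    have hc2 : m'.support.card ≤ d := le_trans (card_support_le hm') hdeg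
    have hcu : n ≤ m.support.card + m'.support.card := by
      have := Finset.card_union_le m.support m'.support
      rw [hcov, Finset.card_univ, Fintype.card_fin] at this
      omega
    rw [Finset.mem_filter, Finset.mem_filter]
    refine ⟨⟨Finset.mem_univ _, hcov, by dsimp only; omega, hc1, by dsimp only; omega, hc2, hkey⟩, ?_, ?_⟩
    · rw [eq_mOf_support hml hm]
      exact MvPolynomial.mem_support_iff.mp hm
    · rw [eq_mOf_support hml hm']
      exact MvPolynomial.mem_support_iff.mp hm'
  · rintro ⟨S, T⟩ hST
    rw [Finset.mem_filter, Finset.mem_filter] at hST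
    obtain ⟨⟨-, hcov, -, -, -, -, hkey⟩, hne1, hne2⟩ := hST
    dsimp only at hcov hkey hne1 hne2 ⊢
    rw [Finset.mem_filter, Finset.mem_filter, Finset.mem_offDiag]
    refine ⟨⟨⟨MvPolynomial.mem_support_iff.mpr hne1, MvPolynomial.mem_support_iff.mpr hne2,
      ?_⟩, ?_⟩, ?_⟩
    · intro h
      dsimp only at h
      have : S = T := by rw [← mOf_support S, ← mOf_support T, h]
      rw [this] at hkey
      exact lt_irrefl _ hkey
    · dsimp only
      rw [mOf_support, mOf_support]
      exact hkey
    · dsimp only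
      rw [mOf_support, mOf_support]
      exact hcov
  · rintro ⟨m, m'⟩ hp
    rw [Finset.mem_filter, Finset.mem_filter, Finset.mem_offDiag] at hp
    obtain ⟨⟨⟨hm, hm', -⟩, -⟩, -⟩ := hp
    dsimp only
    rw [eq_mOf_support hml hm, eq_mOf_support hml hm']
  · rintro ⟨S, T⟩ hST
    dsimp only
    rw [mOf_support, mOf_support]
  · rintro ⟨m, m'⟩ hp
    rw [Finset.mem_filter, Finset.mem_filter, Finset.mem_offDiag] at hp
    obtain ⟨⟨⟨hm, hm', -⟩, -⟩, -⟩ := hp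
    dsimp only
    rw [show (∑ j ∈ m.support, Finsupp.single j 1 : Fin n →₀ ℕ) = mOf m.support from rfl,
      show (∑ j ∈ m'.support, Finsupp.single j 1 : Fin n →₀ ℕ) = mOf m'.support from rfl,
      eq_mOf_support hml hm, eq_mOf_support hml hm']

/-- For `n ≥ 4`, `n/2 ≤ d ≤ n - 2` and a multilinear `f` over `F_2` of degree `≤ d`,
`|Z(f)| ≡ 0 (mod 4)` iff `Σ_{{u,v}} a_u a_v = 0`, summing over unordered pairs `{u, v}` with
`u, v ∈ {0,1}^n`, `|u|, |v| ∈ [n-d, d]`, `u + v ≥ (1,…,1)`. `0-1` vectors are encoded as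
subsets `S, T ⊆ Fin n` (so `u + v ≥ 1` means `S ∪ T = univ`), and each unordered pair is
counted once via the strict comparison of the binary codes `Σ_{j ∈ S} 2^j < Σ_{j ∈ T} 2^j`. -/
theorem stmt18 (n d : ℕ) (hn : 4 ≤ n) (hd1 : n ≤ 2 * d) (hd2 : d ≤ n - 2)
    (f : MvPolynomial (Fin n) (ZMod 2)) (hdeg : f.totalDegree ≤ d)
    (hml : ∀ j, f.degreeOf j ≤ 1) :
    4 ∣ Nat.card {x : Fin n → ZMod 2 // eval x f = 0} ↔
      ∑ ST ∈ Finset.univ.filter (fun ST : Finset (Fin n) × Finset (Fin n) =>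
          ST.1 ∪ ST.2 = Finset.univ ∧
          n - d ≤ ST.1.card ∧ ST.1.card ≤ d ∧ n - d ≤ ST.2.card ∧ ST.2.card ≤ d ∧
          (∑ j ∈ ST.1, 2 ^ (j : ℕ)) < ∑ j ∈ ST.2, 2 ^ (j : ℕ)),
        coeff (∑ j ∈ ST.1, Finsupp.single j 1) f *
          coeff (∑ j ∈ ST.2, Finsupp.single j 1) f = 0 := by
  classical
  set N := ∑ x : Fin n → ZMod 2, (eval x f).val with hN
  have hcard : Nat.card {x : Fin n → ZMod 2 // eval x f = 0}
      = (Finset.univ.filter fun x : Fin n → ZMod 2 => eval x f = 0).card := by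
    rw [Nat.card_eq_fintype_card, Fintype.card_subtype]
  have hval : ∀ a : ZMod 2, a.val = if a = 0 then 0 else 1 := by decide
  have hNcard : N = (Finset.univ.filter fun x : Fin n → ZMod 2 => ¬ eval x f = 0).card := by
    rw [hN, Finset.sum_congr rfl fun x _ => hval (eval x f), Finset.sum_ite,
      Finset.sum_const, Finset.sum_const, smul_eq_mul, smul_eq_mul, mul_zero, mul_one,
      zero_add]
  have htot : (Finset.univ.filter fun x : Fin n → ZMod 2 => eval x f = 0).card + N = 2 ^ n := by
    rw [hNcard, Finset.card_filter_add_card_filter_not, Finset.card_univ,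
      Fintype.card_fun, ZMod.card, Fintype.card_fin]
  have h4 : (4 : ℕ) ∣ 2 ^ n := by
    rw [show (4 : ℕ) = 2 ^ 2 from rfl]
    exact pow_dvd_pow 2 (by omega)
  have hiff1 : (4 ∣ Nat.card {x : Fin n → ZMod 2 // eval x f = 0}) ↔ 4 ∣ N := by
    rw [hcard]
    omega
  rw [hiff1, show (4 : ℕ) ∣ N ↔ ((N : ZMod 4) = 0) from
    (ZMod.natCast_eq_zero_iff N 4).symm]
  have hNlift : ((N : ℕ) : ZMod 4) = ∑ x : Fin n → ZMod 2, lft (eval x f) := by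
    rw [hN, Nat.cast_sum]
    rfl
  rw [hNlift, key_eval hn hd2 f hdeg hml, neg_eq_zero]
  rw [Finset.sum_congr rfl fun p _ =>
    (lft_mul (coeff p.1 f) (coeff p.2 f)).symm, ← two_lft_sum]
  rw [show ∀ a : ZMod 2, (2 * lft a = 0 ↔ a = 0) from by decide]
  rw [reindex f hdeg hml]
end
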